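/- arXiv:1908.03890 — 5 statements merged into one kernel-verified Lean document; each statement's English description precedes it below -/
import Mathlib

section
/- Every linear recurrence sequence over ℚ all of whose eigenvalues are roots of rational numbers belongs to PolyRat. -/
/-- The smallest class of sequences `ℕ → ℚ` containing all arithmetic and all geometric
sequences and closed under sum, Hadamard product, shift, and `k`-ary shuffle for `k ≥ 1`. -/
inductive PolyRat : (ℕ → ℚ) → Prop where
  | arith (a b : ℚ) (u : ℕ → ℚ) (h0 : u 0 = a) (hs : ∀ n, u (n + 1) = u n + b) : PolyRat u
  | geo (a l : ℚ) (u : ℕ → ℚ) (h0 : u 0 = a) (hs : ∀ n, u (n + 1) = l * u n) : PolyRat u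
  | sum (u v : ℕ → ℚ) (hu : PolyRat u) (hv : PolyRat v) : PolyRat (fun n => u n + v n)
  | had (u v : ℕ → ℚ) (hu : PolyRat u) (hv : PolyRat v) : PolyRat (fun n => u n * v n)
  | shift (a : ℚ) (u w : ℕ → ℚ) (hu : PolyRat u) (h0 : w 0 = a)
      (hs : ∀ n, w (n + 1) = u n) : PolyRat w
  | shuffle (k : ℕ) (hk : 1 ≤ k) (us : Fin k → ℕ → ℚ) (w : ℕ → ℚ)
      (hw : ∀ (n : ℕ) (i : Fin k), w (k * n + (i : ℕ)) = us i n)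
      (hus : ∀ i, PolyRat (us i)) : PolyRat w

/-- `u` satisfies the linear recurrence with coefficients `a 0 = a_1, …, a (k-1) = a_k`:
`u (n+k) = a_1 · u (n+k-1) + … + a_k · u n`. -/
def SatisfiesLinRec {k : ℕ} (a : Fin k → ℚ) (u : ℕ → ℚ) : Prop :=
  ∀ n : ℕ, u (n + k) = ∑ i : Fin k, a i * u (n + (k - 1 - (i : ℕ)))

/-- A linear recurrence sequence over ℚ. -/
def IsLRS (u : ℕ → ℚ) : Prop :=
  ∃ (k : ℕ), 1 ≤ k ∧ ∃ a : Fin k → ℚ, SatisfiesLinRec a u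

/-- The characteristic polynomial `x^k - a_1·x^(k-1) - … - a_k` of a linear recurrence. -/
noncomputable def charPoly {k : ℕ} (a : Fin k → ℚ) : Polynomial ℚ :=
  Polynomial.X ^ k - ∑ i : Fin k, Polynomial.C (a i) * Polynomial.X ^ (k - 1 - (i : ℕ))

/-- A complex number is a root of a rational number if some positive power of it is rational. -/
def IsRootOfRational (z : ℂ) : Prop := ∃ m : ℕ, 1 ≤ m ∧ ∃ q : ℚ, z ^ m = (q : ℂ)


open Polynomial

noncomputable section AuxPR

abbrev SeqQ : Type := ℕ → ℚ

/-- The shift endomorphism on sequences. -/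
def shP : Module.End ℚ SeqQ where
  toFun v := fun n => v (n + 1)
  map_add' u v := rfl
  map_smul' c v := rfl

@[simp] lemma shP_apply (v : SeqQ) (n : ℕ) : shP v n = v (n + 1) := rfl

/-- Transport of polynomial evaluation along an intertwining linear map. -/
lemma aeval_transport {M N : Type*} [AddCommGroup M] [Module ℚ M] [AddCommGroup N] [Module ℚ N]
    (T : M →ₗ[ℚ] N) (f : Module.End ℚ M) (g : Module.End ℚ N)
    (h : ∀ x, T (f x) = g (T x)) (r : Polynomial ℚ) (x : M) :
    T ((Polynomial.aeval f r) x) = (Polynomial.aeval g r) (T x) := by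
  have hpow : ∀ (i : ℕ) (x : M), T ((f ^ i) x) = (g ^ i) (T x) := by
    intro i
    induction i with
    | zero => intro x; simp
    | succ i ih =>
        intro x
        rw [pow_succ, Module.End.mul_apply, ih, h, pow_succ, Module.End.mul_apply]
  induction r using Polynomial.induction_on' with
  | add p q hp hq => simp [map_add, LinearMap.add_apply, hp, hq]
  | monomial i c =>
      simp only [Polynomial.aeval_monomial, Module.End.mul_apply,
        Module.algebraMap_end_apply, map_smul, hpow]

end AuxPR

/-- Generator sequences `n ↦ n^j * μ^n`. -/
def gSeq (j : ℕ) (μ : ℚ) : SeqQ := fun n => (n : ℚ) ^ j * μ ^ n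

def GenS : Set SeqQ := {f | ∃ j μ, f = gSeq j μ}

def Espan : Submodule ℚ SeqQ := Submodule.span ℚ GenS

def gSeq_mem_espan (j : ℕ) (μ : ℚ) : gSeq j μ ∈ Espan :=
  Submodule.subset_span ⟨j, μ, rfl⟩

/-- `v` eventually agrees with an element of `Espan`. -/
def EvG (v : SeqQ) : Prop := ∃ e ∈ Espan, ∃ N, ∀ n ≥ N, v n = e n

lemma polyRat_congr {u v : SeqQ} (h : PolyRat u) (he : ∀ n, u n = v n) : PolyRat v :=
  (funext he : u = v) ▸ h

lemma polyRat_const (c : ℚ) : PolyRat (fun _ => c) :=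
  PolyRat.geo c 1 _ rfl (fun n => (one_mul c).symm)

lemma polyRat_id : PolyRat (fun n => (n : ℚ)) :=
  PolyRat.arith 0 1 _ (by norm_num) (fun n => by push_cast; ring)

lemma polyRat_gseq (j : ℕ) (μ : ℚ) : PolyRat (gSeq j μ) := by
  induction j with
  | zero =>
      refine PolyRat.geo 1 μ _ (by simp [gSeq]) (fun n => ?_)
      simp [gSeq, pow_succ]; ring
  | succ j ih =>
      refine polyRat_congr (PolyRat.had _ _ polyRat_id ih) (fun n => ?_)
      simp [gSeq, pow_succ]; ring

lemma polyRat_smul (c : ℚ) {u : SeqQ} (h : PolyRat u) : PolyRat (c • u) :=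
  polyRat_congr (PolyRat.had _ _ (polyRat_const c) h) (fun n => rfl)

lemma polyRat_add {u v : SeqQ} (hu : PolyRat u) (hv : PolyRat v) : PolyRat (u + v) :=
  polyRat_congr (PolyRat.sum _ _ hu hv) (fun n => rfl)

lemma polyRat_zero : PolyRat (0 : SeqQ) := polyRat_const 0

lemma espan_polyRat {e : SeqQ} (he : e ∈ Espan) : PolyRat e := by
  induction he using Submodule.span_induction with
  | mem f hf => obtain ⟨j, μ, rfl⟩ := hf; exact polyRat_gseq j μ
  | zero => exact polyRat_zero
  | add f g _ _ hf hg => exact polyRat_add hf hg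
  | smul c f _ hf => exact polyRat_smul c hf

/-- `Espan` is closed under the shift. -/
lemma shP_mem_espan {e : SeqQ} (he : e ∈ Espan) : shP e ∈ Espan := by
  induction he using Submodule.span_induction with
  | mem f hf =>
      obtain ⟨j, μ, rfl⟩ := hf
      have : shP (gSeq j μ) = ∑ t ∈ Finset.range (j + 1), ((j.choose t : ℚ) * μ) • gSeq t μ := by
        funext n
        rw [Finset.sum_apply]
        simp only [shP_apply, gSeq, Pi.smul_apply, smul_eq_mul]
        push_cast
        rw [add_pow]
        rw [Finset.sum_mul]
        refine Finset.sum_congr rfl (fun t ht => ?_)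
        rw [pow_succ]
        ring
      rw [this]
      exact Submodule.sum_mem _ (fun t _ => Submodule.smul_mem _ _ (gSeq_mem_espan t μ))
  | zero => rw [map_zero]; exact Submodule.zero_mem _
  | add f g _ _ hf hg => rw [map_add]; exact Submodule.add_mem _ hf hg
  | smul c f _ hf => rw [map_smul]; exact Submodule.smul_mem _ _ hf

/-- A sequence that eventually agrees with an element of `Espan` is `PolyRat`. -/
lemma polyRat_of_eventually : ∀ (N : ℕ) (v e : SeqQ), e ∈ Espan → (∀ n ≥ N, v n = e n) →
    PolyRat v := by
  intro N
  induction N with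
  | zero =>
      intro v e he h
      have : v = e := funext (fun n => h n (Nat.zero_le n))
      rw [this]; exact espan_polyRat he
  | succ N ih =>
      intro v e he h
      have hv' : PolyRat (fun n => v (n + 1)) :=
        ih _ (shP e) (shP_mem_espan he) (fun n hn => h (n + 1) (Nat.succ_le_succ hn))
      exact PolyRat.shift (v 0) _ v hv' rfl (fun n => rfl)

lemma polyRat_of_evg {v : SeqQ} (h : EvG v) : PolyRat v := by
  obtain ⟨e, he, N, hN⟩ := h
  exact polyRat_of_eventually N v e he hN

lemma keyA (lam μ : ℚ) (j n : ℕ) :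
    gSeq j μ (n + 1) - lam * gSeq j μ n
      = (μ - lam) * gSeq j μ n
        + ∑ t ∈ Finset.range j, (μ * (j.choose t : ℚ)) * gSeq t μ n := by
  simp only [gSeq]
  push_cast
  rw [add_pow, Finset.sum_range_succ]
  rw [add_mul, Finset.sum_mul]
  have hsum : ∑ t ∈ Finset.range j, (n : ℚ) ^ t * 1 ^ (j - t) * (j.choose t : ℚ) * μ ^ (n + 1)
      = ∑ t ∈ Finset.range j, (μ * (j.choose t : ℚ)) * ((n : ℚ) ^ t * μ ^ n) := by
    refine Finset.sum_congr rfl (fun t _ => ?_)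
    rw [pow_succ]; ring
  rw [hsum, pow_succ]
  simp only [Nat.choose_self, Nat.cast_one, one_pow, mul_one, one_mul]
  ring

lemma keyC (lam : ℚ) (j n : ℕ) :
    gSeq (j + 1) lam (n + 1) - lam * gSeq (j + 1) lam n
      = (lam * (j + 1)) * gSeq j lam n
        + ∑ t ∈ Finset.range j, (lam * ((j + 1).choose t : ℚ)) * gSeq t lam n := by
  simp only [gSeq]
  push_cast
  rw [add_pow, Finset.sum_range_succ, Finset.sum_range_succ]
  rw [add_mul, add_mul, Finset.sum_mul]
  have hsum : ∑ t ∈ Finset.range j, (n : ℚ) ^ t * 1 ^ (j + 1 - t) * ((j + 1).choose t : ℚ)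
        * lam ^ (n + 1)
      = ∑ t ∈ Finset.range j, (lam * ((j + 1).choose t : ℚ)) * ((n : ℚ) ^ t * lam ^ n) := by
    refine Finset.sum_congr rfl (fun t _ => ?_)
    rw [pow_succ]; ring
  rw [hsum, Nat.choose_succ_self_right, Nat.choose_self]
  push_cast
  rw [pow_succ, pow_succ]
  ring

lemma preimage_step (lam c0 : ℚ) (hc0 : c0 ≠ 0) (j : ℕ) (μ : ℚ) (w : ℕ → ℚ) (g target : SeqQ)
    (hg : g ∈ Espan)
    (hid : ∀ n, g (n + 1) - lam * g n
      = c0 * target n + ∑ t ∈ Finset.range j, w t * gSeq t μ n)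
    (hpre : ∀ t, t < j → ∃ e ∈ Espan, ∀ n, 1 ≤ n → e (n + 1) - lam * e n = gSeq t μ n) :
    ∃ e' ∈ Espan, ∀ n, 1 ≤ n → e' (n + 1) - lam * e' n = target n := by
  have hpre' : ∀ t, t < j → ∃ e, e ∈ Espan ∧
      ∀ n, 1 ≤ n → e (n + 1) - lam * e n = gSeq t μ n := by
    intro t ht; obtain ⟨e, h1, h2⟩ := hpre t ht; exact ⟨e, h1, h2⟩
  choose E hE1 hE2 using hpre'
  set s := ∑ t ∈ (Finset.range j).attach, w t.1 • E t.1 (Finset.mem_range.mp t.2) with hs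
  refine ⟨c0⁻¹ • (g - s), ?_, ?_⟩
  · exact Submodule.smul_mem _ _ (Submodule.sub_mem _ hg
      (Submodule.sum_mem _ (fun t _ => Submodule.smul_mem _ _ (hE1 _ _))))
  · intro n hn
    have hsn : ∀ m, s m
        = ∑ t ∈ (Finset.range j).attach, w t.1 * E t.1 (Finset.mem_range.mp t.2) m := by
      intro m; rw [hs, Finset.sum_apply]; rfl
    have h1 : s (n + 1) - lam * s n = ∑ t ∈ Finset.range j, w t * gSeq t μ n := by
      rw [hsn, hsn, ← Finset.sum_attach (Finset.range j) (fun t => w t * gSeq t μ n),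
        Finset.mul_sum, ← Finset.sum_sub_distrib]
      refine Finset.sum_congr rfl (fun t _ => ?_)
      rw [← hE2 t.1 (Finset.mem_range.mp t.2) n hn]
      ring
    have h2 : g (n + 1) - lam * g n - (s (n + 1) - lam * s n) = c0 * target n := by
      rw [h1, hid n]; ring
    simp only [Pi.smul_apply, Pi.sub_apply, smul_eq_mul]
    rw [show c0⁻¹ * (g (n + 1) - s (n + 1)) - lam * (c0⁻¹ * (g n - s n))
        = c0⁻¹ * (g (n + 1) - lam * g n - (s (n + 1) - lam * s n)) from by ring,
      h2, inv_mul_cancel_left₀ hc0]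

/-- Eventual preimage of every generator. -/
lemma preimage_gseq (lam : ℚ) : ∀ (j : ℕ) (μ : ℚ), ∃ e' ∈ Espan,
    ∀ n, 1 ≤ n → e' (n + 1) - lam * e' n = gSeq j μ n := by
  intro j
  induction j using Nat.strong_induction_on with
  | _ j IH =>
    intro μ
    by_cases hml : μ = lam
    · subst hml
      by_cases h0 : μ = 0
      · subst h0
        refine ⟨0, Submodule.zero_mem _, fun n hn => ?_⟩
        simp [gSeq, zero_pow (by omega : n ≠ 0)]
      · refine preimage_step μ (μ * (j + 1)) (by positivity) j μ
          (fun t => μ * ((j + 1).choose t : ℚ)) (gSeq (j + 1) μ) (gSeq j μ)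
          (gSeq_mem_espan _ _) (fun n => keyC μ j n) (fun t ht => IH t ht μ)
    · refine preimage_step lam (μ - lam) (sub_ne_zero.mpr hml) j μ
        (fun t => μ * (j.choose t : ℚ)) (gSeq j μ) (gSeq j μ)
        (gSeq_mem_espan _ _) (fun n => keyA lam μ j n) (fun t ht => IH t ht μ)

/-- Eventual preimage of every element of `Espan`. -/
lemma preimage_espan (lam : ℚ) {e : SeqQ} (he : e ∈ Espan) : ∃ e' ∈ Espan,
    ∀ n, 1 ≤ n → e' (n + 1) - lam * e' n = e n := by
  induction he using Submodule.span_induction with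
  | mem f hf => obtain ⟨j, μ, rfl⟩ := hf; exact preimage_gseq lam j μ
  | zero => exact ⟨0, Submodule.zero_mem _, fun n _ => by simp⟩
  | add f g _ _ hf hg =>
      obtain ⟨e1, he1, hp1⟩ := hf
      obtain ⟨e2, he2, hp2⟩ := hg
      refine ⟨e1 + e2, Submodule.add_mem _ he1 he2, fun n hn => ?_⟩
      have := hp1 n hn; have := hp2 n hn
      simp only [Pi.add_apply]
      linarith [hp1 n hn, hp2 n hn]
  | smul c f _ hf =>
      obtain ⟨e1, he1, hp1⟩ := hf
      refine ⟨c • e1, Submodule.smul_mem _ _ he1, fun n hn => ?_⟩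
      simp only [Pi.smul_apply, smul_eq_mul]
      rw [show c * e1 (n + 1) - lam * (c * e1 n) = c * (e1 (n + 1) - lam * e1 n) from by ring,
        hp1 n hn]

/-- `EvG` is closed under solving first-order linear recurrences. -/
lemma evg_closed (lam : ℚ) (v w : SeqQ) (hw : EvG w)
    (hrec : ∀ n, v (n + 1) = lam * v n + w n) : EvG v := by
  obtain ⟨e, he, N, hN⟩ := hw
  obtain ⟨e', he', hp⟩ := preimage_espan lam he
  set M := max N 1 with hM
  have hd : ∀ n, M ≤ n → (v (n + 1) - e' (n + 1)) = lam * (v n - e' n) := by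
    intro n hn
    have h1 : e' (n + 1) - lam * e' n = e n := hp n (le_trans (le_max_right N 1) hn)
    have h2 : w n = e n := hN n (le_trans (le_max_left N 1) hn)
    have h3 := hrec n
    linarith
  by_cases hlam : lam = 0
  · subst hlam
    refine ⟨e', he', M + 1, fun n hn => ?_⟩
    obtain ⟨n', rfl⟩ : ∃ n', n = n' + 1 := ⟨n - 1, by omega⟩
    have := hd n' (by omega)
    simp only [zero_mul] at this
    linarith
  · set c : ℚ := (v M - e' M) / lam ^ M with hc
    have hcl : ∀ n, M ≤ n → v n - e' n = c * lam ^ n := by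
      intro n hn
      induction n, hn using Nat.le_induction with
      | base => rw [hc]; field_simp
      | succ n hn ih => rw [hd n hn, ih, pow_succ]; ring
    refine ⟨e' + c • gSeq 0 lam, Submodule.add_mem _ he'
      (Submodule.smul_mem _ _ (gSeq_mem_espan 0 lam)), M, fun n hn => ?_⟩
    have := hcl n hn
    simp only [Pi.add_apply, Pi.smul_apply, smul_eq_mul, gSeq, pow_zero, one_mul]
    linarith

/-- Any solution of a linear recurrence whose characteristic polynomial splits into rational
linear factors eventually agrees with an exponential polynomial. -/
lemma evg_of_list_prod : ∀ (L : List ℚ) (v : SeqQ),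
    (Polynomial.aeval shP ((L.map (fun l => X - C l)).prod)) v = 0 → EvG v := by
  intro L
  induction L with
  | nil =>
      intro v hv
      simp only [List.map_nil, List.prod_nil, map_one, Module.End.one_apply] at hv
      exact ⟨0, Submodule.zero_mem _, 0, fun n _ => by rw [hv]⟩
  | cons l L ih =>
      intro v hv
      rw [List.map_cons, List.prod_cons, mul_comm, map_mul, Module.End.mul_apply] at hv
      set w := (Polynomial.aeval shP (X - C l)) v with hw
      have hwv : ∀ n, w n = v (n + 1) - l * v n := by
        intro n
        rw [hw]
        simp [Polynomial.aeval_X, Polynomial.aeval_C, map_sub, Module.algebraMap_end_apply]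
      exact evg_closed l v w (ih w hv) (fun n => by rw [hwv n]; ring)

/-- A monic rational polynomial whose complex roots are all rational splits into rational
linear factors. -/
lemma monic_prod_linear : ∀ (d : ℕ) (q : ℚ[X]), q.Monic → q.natDegree = d →
    (∀ z : ℂ, Polynomial.aeval z q = 0 → ∃ r : ℚ, (r : ℂ) = z) →
    ∃ L : List ℚ, q = ((L.map (fun l => X - C l)).prod) := by
  intro d
  induction d using Nat.strong_induction_on with
  | _ d IH =>
    intro q hq hdeg hroots
    rcases Nat.eq_zero_or_pos d with hd0 | hdpos
    · subst hd0
      exact ⟨[], by simpa using hq.natDegree_eq_zero.mp hdeg⟩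
    · have hdegmap : (q.map (algebraMap ℚ ℂ)).degree = (d : WithBot ℕ) := by
        rw [Polynomial.degree_map_eq_of_injective (algebraMap ℚ ℂ).injective,
          Polynomial.degree_eq_natDegree hq.ne_zero, hdeg]
      have hne : (q.map (algebraMap ℚ ℂ)).degree ≠ 0 := by
        rw [hdegmap]; exact_mod_cast hdpos.ne'
      obtain ⟨z, hz⟩ := IsAlgClosed.exists_root _ hne
      have hzeval : Polynomial.aeval z q = 0 := by
        rwa [Polynomial.aeval_def, Polynomial.eval₂_eq_eval_map]
      obtain ⟨r, rfl⟩ := hroots z hzeval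
      have hevalr : q.eval r = 0 := by
        have h1 : ((q.eval r : ℚ) : ℂ) = (q.map (algebraMap ℚ ℂ)).eval ((r : ℚ) : ℂ) := by
          rw [Polynomial.eval_map, show ((r : ℚ) : ℂ) = algebraMap ℚ ℂ r from rfl,
            Polynomial.eval₂_at_apply]
          rfl
        have h2 : ((q.eval r : ℚ) : ℂ) = 0 := by rw [h1]; exact hz
        exact_mod_cast h2
      obtain ⟨q', hq'⟩ := Polynomial.dvd_iff_isRoot.mpr hevalr
      have hmon' : q'.Monic := (Polynomial.monic_X_sub_C r).of_mul_monic_left (hq' ▸ hq)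
      have hdeg' : q'.natDegree = d - 1 := by
        have := congrArg Polynomial.natDegree hq'
        rw [Polynomial.natDegree_mul (Polynomial.X_sub_C_ne_zero r) hmon'.ne_zero,
          Polynomial.natDegree_X_sub_C, hdeg] at this
        omega
      have hroots' : ∀ z : ℂ, Polynomial.aeval z q' = 0 → ∃ r' : ℚ, (r' : ℂ) = z := by
        intro z hz'
        refine hroots z ?_
        rw [hq', map_mul, hz', mul_zero]
      obtain ⟨L, hL⟩ := IH (d - 1) (by omega) q' hmon' hdeg' hroots'
      exact ⟨r :: L, by rw [hq', hL, List.map_cons, List.prod_cons]⟩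

/-- A complex root of the characteristic polynomial of a matrix lies in its spectrum. -/
lemma root_charpoly_mem_spectrum {d : ℕ} (A : Matrix (Fin d) (Fin d) ℂ) {z : ℂ}
    (h : (Matrix.charpoly A).eval z = 0) : z ∈ spectrum ℂ A := by
  rw [spectrum.mem_iff]
  intro hu
  rw [Matrix.isUnit_iff_isUnit_det] at hu
  have hdet : (algebraMap ℂ (Matrix (Fin d) (Fin d) ℂ) z - A).det = 0 := by
    have h2 := _root_.eval_det (Matrix.charmatrix A) z
    rw [← Matrix.charpoly, Matrix.matPolyEquiv_charmatrix] at h2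
    rw [h] at h2
    have h3 : Polynomial.eval (Matrix.scalar (Fin d) z) (X - C A)
        = algebraMap ℂ (Matrix (Fin d) (Fin d) ℂ) z - A := by
      simp [Polynomial.eval_sub, Matrix.scalar, Matrix.algebraMap_eq_diagonal]
    rw [h3] at h2
    exact h2.symm
  rw [hdet] at hu
  exact (not_isUnit_zero : ¬ IsUnit (0 : ℂ)) hu

/-- Sampling map: `v ↦ (n ↦ v (m*n+j))`. -/
def sampL (m j : ℕ) : SeqQ →ₗ[ℚ] SeqQ where
  toFun v := fun n => v (m * n + j)
  map_add' u v := rfl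
  map_smul' c v := rfl

lemma shP_pow : ∀ (i : ℕ) (v : SeqQ) (n : ℕ), (shP ^ i) v n = v (n + i)
  | 0, v, n => rfl
  | (i+1), v, n => by
      rw [pow_succ', Module.End.mul_apply]
      show (shP ^ i) v (n + 1) = v (n + (i + 1))
      rw [shP_pow i v (n + 1)]
      exact congrArg v (by omega)

theorem auxMainLRS (u : ℕ → ℚ) (k : ℕ) (hk : 1 ≤ k)
    (a : Fin k → ℚ) (hrec : SatisfiesLinRec a u)
    (heig : ∀ z : ℂ, Polynomial.aeval z (charPoly a) = 0 → IsRootOfRational z) :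
    PolyRat u := by
  classical
  set p := charPoly a with hp
  -- p is monic
  have hmonic : p.Monic := by
    rw [hp, charPoly]
    obtain ⟨k', rfl⟩ : ∃ k', k = k' + 1 := ⟨k - 1, by omega⟩
    have hdlt : (∑ i : Fin (k' + 1), C (a i) * X ^ (k' + 1 - 1 - (i : ℕ))).degree
        ≤ (k' : WithBot ℕ) := by
      refine le_trans (Polynomial.degree_sum_le _ _) ?_
      refine Finset.sup_le (fun i _ => le_trans (Polynomial.degree_C_mul_X_pow_le _ _) ?_)
      exact_mod_cast (by omega : k' + 1 - 1 - (i : ℕ) ≤ k')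
    exact Polynomial.monic_X_pow_sub (lt_of_le_of_lt hdlt
      (by exact_mod_cast Nat.lt_succ_self k'))
  set pC := p.map (algebraMap ℚ ℂ) with hpC
  have hpCne : pC ≠ 0 := (hmonic.map _).ne_zero
  -- exponent function
  set F : ℂ → ℕ := fun z => if h : IsRootOfRational z then h.choose else 1 with hF
  have hF1 : ∀ z, 1 ≤ F z := by
    intro z
    rw [hF]
    dsimp only
    split
    · next h => exact h.choose_spec.1
    · exact le_refl 1
  have hF2 : ∀ z, IsRootOfRational z → ∃ q : ℚ, z ^ (F z) = (q : ℂ) := by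
    intro z h
    rw [hF]
    dsimp only
    rw [dif_pos h]
    exact h.choose_spec.2
  set m := ∏ w ∈ pC.roots.toFinset, F w with hm
  have hm1 : 1 ≤ m := Finset.one_le_prod' (fun w _ => hF1 w)
  -- the solution space
  set V : Submodule ℚ SeqQ := LinearMap.ker (Polynomial.aeval shP p) with hV
  -- pointwise formula for the action of p
  have hform : ∀ (w : SeqQ) (n : ℕ), (Polynomial.aeval shP p) w n
      = w (n + k) - ∑ i : Fin k, a i * w (n + (k - 1 - (i : ℕ))) := by
    intro w n
    rw [hp, charPoly, map_sub, map_pow, Polynomial.aeval_X, map_sum]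
    simp only [LinearMap.sub_apply, Pi.sub_apply, LinearMap.sum_apply, Finset.sum_apply]
    rw [shP_pow]
    congr 1
    refine Finset.sum_congr rfl (fun i _ => ?_)
    rw [map_mul, Polynomial.aeval_C, map_pow, Polynomial.aeval_X, Module.End.mul_apply,
      Module.algebraMap_end_apply]
    simp only [Pi.smul_apply, smul_eq_mul]
    rw [shP_pow]
  have hu : u ∈ V := by
    rw [hV, LinearMap.mem_ker]
    funext n
    rw [hform]
    have := hrec n
    simp only [Pi.zero_apply]
    linarith [hrec n]
  -- V is finite dimensional
  have hinj : Function.Injective (fun (w : V) => (fun i : Fin k => (w : SeqQ) i)) := by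
    intro w1 w2 h12
    have hdiff : (w1 : SeqQ) - (w2 : SeqQ) ∈ V := Submodule.sub_mem _ w1.2 w2.2
    have hzero : ∀ n, ((w1 : SeqQ) - (w2 : SeqQ)) n = 0 := by
      intro n
      induction n using Nat.strong_induction_on with
      | _ n IH =>
        rcases Nat.lt_or_ge n k with hnk | hnk
        · have := congrFun h12 ⟨n, hnk⟩
          simp only [Pi.sub_apply]
          simpa [sub_eq_zero] using this
        · obtain ⟨n', rfl⟩ : ∃ n', n = n' + k := ⟨n - k, by omega⟩
          have h0 : (Polynomial.aeval shP p) ((w1 : SeqQ) - (w2 : SeqQ)) n' = 0 := by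
            rw [LinearMap.mem_ker.mp hdiff]
            rfl
          rw [hform] at h0
          have hterm : ∀ i : Fin k, a i * ((w1 : SeqQ) - (w2 : SeqQ)) (n' + (k - 1 - (i : ℕ)))
              = 0 := by
            intro i
            rw [IH (n' + (k - 1 - (i : ℕ))) (by omega), mul_zero]
          rw [Finset.sum_congr rfl (fun i _ => hterm i)] at h0
          simpa using h0
    exact Subtype.ext (by
      funext n
      have := hzero n
      simp only [Pi.sub_apply, sub_eq_zero] at this
      exact this)
  letI : FiniteDimensional ℚ V := FiniteDimensional.of_injective
    { toFun := fun (w : V) => (fun i : Fin k => (w : SeqQ) i),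
      map_add' := fun _ _ => rfl, map_smul' := fun _ _ => rfl } hinj
  -- restriction of the shift to V
  have hstab : ∀ x ∈ V, shP x ∈ V := by
    intro x hx
    rw [hV, LinearMap.mem_ker] at hx ⊢
    have hcomm : (Polynomial.aeval shP p) * shP = shP * (Polynomial.aeval shP p) := by
      have hc : Commute ((Polynomial.aeval shP) p) ((Polynomial.aeval shP) (X : ℚ[X])) :=
        (Commute.all p X).map (Polynomial.aeval shP)
      rw [Polynomial.aeval_X] at hc
      exact hc.eq
    calc (Polynomial.aeval shP p) (shP x) = ((Polynomial.aeval shP p) * shP) x := rfl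
      _ = (shP * (Polynomial.aeval shP p)) x := by rw [hcomm]
      _ = shP ((Polynomial.aeval shP p) x) := rfl
      _ = 0 := by rw [hx, map_zero]
  set Shres : Module.End ℚ V := shP.restrict hstab with hShres
  have hShres_val : ∀ x : V, ((Shres x : V) : SeqQ) = shP (x : SeqQ) := fun x => rfl
  set b := Module.finBasis ℚ V with hb
  set φ := LinearMap.toMatrixAlgEquiv b with hφ
  set N := φ Shres with hN
  -- aeval N p = 0
  have hSp : Polynomial.aeval Shres p = 0 := by
    apply LinearMap.ext
    intro x
    apply Subtype.ext
    have := aeval_transport V.subtype Shres shP (fun y => rfl) p x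
    simp only [Submodule.coe_subtype] at this
    rw [LinearMap.zero_apply, ZeroMemClass.coe_zero]
    rw [this]
    exact LinearMap.mem_ker.mp x.2
  have hNp : Polynomial.aeval N p = 0 := by
    rw [hN, Polynomial.aeval_algHom_apply φ Shres p, hSp, map_zero]
  -- characteristic polynomial of the m-th power
  set q := (N ^ m).charpoly with hq
  have hqmon : q.Monic := Matrix.charpoly_monic _
  have hSmq : Polynomial.aeval (Shres ^ m) q = 0 := by
    apply φ.injective
    rw [map_zero, ← Polynomial.aeval_algHom_apply φ (Shres ^ m) q, map_pow, ← hN, hq]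
    exact Matrix.aeval_self_charpoly _
  -- transport to sequences
  have hpowval : ∀ x : V, (((Shres ^ m) x : V) : SeqQ) = (shP ^ m) (x : SeqQ) := by
    intro x
    have := aeval_transport V.subtype Shres shP (fun y => rfl) (X ^ m : ℚ[X]) x
    simp only [map_pow, Polynomial.aeval_X, Submodule.coe_subtype] at this
    exact this
  have huq : (Polynomial.aeval (shP ^ m) q) u = 0 := by
    have := aeval_transport V.subtype (Shres ^ m) (shP ^ m) hpowval q ⟨u, hu⟩
    simp only [Submodule.coe_subtype] at this
    rw [← this, hSmq]
    rfl
  -- all complex roots of q are rational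
  have hqroots : ∀ z : ℂ, Polynomial.aeval z q = 0 → ∃ r : ℚ, (r : ℂ) = z := by
    intro z hz
    set Ψ := (Algebra.ofId ℚ ℂ).mapMatrix
      (m := Fin (Module.finrank ℚ V)) with hΨ
    set P := Ψ N with hP
    have hPp : Polynomial.aeval P p = 0 := by
      rw [hP, Polynomial.aeval_algHom_apply Ψ N p, hNp, map_zero]
    have hPpC : Polynomial.aeval P pC = 0 := by
      rw [hpC]
      rw [Polynomial.aeval_map_algebraMap]
      exact hPp
    -- z is in the spectrum of P^m
    have hchar : (P ^ m).charpoly.eval z = 0 := by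
      have hmap : P ^ m = (N ^ m).map (algebraMap ℚ ℂ) := by
        rw [hP, ← map_pow]
        rfl
      rw [hmap, Matrix.charpoly_map, ← hq]
      rw [Polynomial.aeval_def, Polynomial.eval₂_eq_eval_map] at hz
      exact hz
    have hspec : z ∈ spectrum ℂ (P ^ m) := root_charpoly_mem_spectrum _ hchar
    have hXm : P ^ m = Polynomial.aeval P ((X : ℂ[X]) ^ m) := by
      rw [map_pow, Polynomial.aeval_X]
    rw [hXm, spectrum.map_polynomial_aeval_of_degree_pos P ((X : ℂ[X]) ^ m)
      (by rw [Polynomial.degree_X_pow]; exact_mod_cast hm1)] at hspec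
    obtain ⟨ζ, hζspec, hζm⟩ := hspec
    simp only [Polynomial.eval_pow, Polynomial.eval_X] at hζm
    -- ζ is a root of pC
    have hζmem : Polynomial.eval ζ pC ∈ spectrum ℂ (Polynomial.aeval P pC) :=
      spectrum.subset_polynomial_aeval P pC ⟨ζ, hζspec, rfl⟩
    rw [hPpC] at hζmem
    have hζroot : Polynomial.eval ζ pC = 0 := by
      by_contra hne
      rw [spectrum.mem_iff, sub_zero] at hζmem
      exact hζmem ((isUnit_iff_ne_zero.mpr hne).map
        (algebraMap ℂ (Matrix (Fin (Module.finrank ℚ V)) (Fin (Module.finrank ℚ V)) ℂ)))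
    have hζaeval : Polynomial.aeval ζ p = 0 := by
      rw [Polynomial.aeval_def, Polynomial.eval₂_eq_eval_map]
      exact hζroot
    have hrr := heig ζ hζaeval
    have hζF : ζ ∈ pC.roots.toFinset := by
      rw [Multiset.mem_toFinset, Polynomial.mem_roots hpCne]
      exact hζroot
    have hdvd : F ζ ∣ m := by rw [hm]; exact Finset.dvd_prod_of_mem F hζF
    obtain ⟨rq, hrq⟩ := hF2 ζ hrr
    refine ⟨rq ^ (m / F ζ), ?_⟩
    rw [← hζm]
    push_cast
    rw [← hrq, ← pow_mul, Nat.mul_div_cancel' hdvd]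
  -- factor q into rational linear factors
  obtain ⟨L, hL⟩ := monic_prod_linear q.natDegree q hqmon rfl hqroots
  -- the subsequences are PolyRat
  have hPRsub : ∀ j : ℕ, PolyRat (fun n => u (m * n + j)) := by
    intro j
    have hsamp : ∀ v : SeqQ, sampL m j ((shP ^ m) v) = shP (sampL m j v) := by
      intro v
      funext n
      show (shP ^ m) v (m * n + j) = v (m * (n + 1) + j)
      rw [shP_pow]
      congr 1
      ring
    have htr := aeval_transport (sampL m j) (shP ^ m) shP hsamp q u
    rw [huq, map_zero] at htr
    refine polyRat_of_evg (evg_of_list_prod L _ ?_)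
    rw [← hL]
    exact htr.symm
  exact PolyRat.shuffle m hm1 (fun i => fun n => u (m * n + (i : ℕ))) u
    (fun n i => rfl) (fun i => hPRsub (i : ℕ))

/-- Every linear recurrence sequence over ℚ all of whose eigenvalues are
roots of rational numbers belongs to PolyRat. -/
theorem lrs_with_rootOfRational_eigenvalues_mem_polyRat (u : ℕ → ℚ) (k : ℕ) (hk : 1 ≤ k)
    (a : Fin k → ℚ) (hrec : SatisfiesLinRec a u)
    (heig : ∀ z : ℂ, Polynomial.aeval z (charPoly a) = 0 → IsRootOfRational z) :
    PolyRat u := by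
  exact auxMainLRS u k hk a hrec heig
end

section
/- Every sequence in PolyRat is recognized by a polynomially ambiguous weighted automaton over a unary alphabet. -/
/-- The weighted automaton with states `Fin d`, transition matrix `M`, initial vector `I`
and final vector `F` recognizes the sequence `u`, i.e. `u n = Iᵀ · Mⁿ · F`. -/
def Recognizes {d : ℕ} (M : Matrix (Fin d) (Fin d) ℚ) (I F : Fin d → ℚ) (u : ℕ → ℚ) : Prop :=
  ∀ n : ℕ, u n = dotProduct I ((M ^ n).mulVec F)

/-- `r` is an accepting run of length `n` of the weighted automaton `(Fin d, M, I, F)`. -/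
def AcceptingRun {d : ℕ} (M : Matrix (Fin d) (Fin d) ℚ) (I F : Fin d → ℚ) (n : ℕ)
    (r : Fin (n + 1) → Fin d) : Prop :=
  I (r 0) ≠ 0 ∧ F (r (Fin.last n)) ≠ 0 ∧ ∀ i : Fin n, M (r i.castSucc) (r i.succ) ≠ 0

/-- The ambiguity of a weighted automaton: the number of accepting runs of length `n`. -/
noncomputable def ambiguity {d : ℕ} (M : Matrix (Fin d) (Fin d) ℚ) (I F : Fin d → ℚ)
    (n : ℕ) : ℕ :=
  Nat.card {r : Fin (n + 1) → Fin d // AcceptingRun M I F n r}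

/-- A weighted automaton is polynomially ambiguous if its ambiguity is bounded by a
polynomial in the input length. -/
def PolyAmbiguous {d : ℕ} (M : Matrix (Fin d) (Fin d) ℚ) (I F : Fin d → ℚ) : Prop :=
  ∃ P : Polynomial ℕ, ∀ n : ℕ, ambiguity M I F n ≤ P.eval n

open Matrix in
/-- Auxiliary: recognizability by a "good" automaton over an arbitrary finite state type:
levels `φ` are monotone along nonzero transitions, transitions are deterministic within a
level, and the levels are bounded by `L`. -/
def GoodRec (u : ℕ → ℚ) : Prop :=
  ∃ (Q : Type) (_ : Fintype Q) (_ : DecidableEq Q) (M : Matrix Q Q ℚ) (I F : Q → ℚ)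
    (φ : Q → ℕ) (L : ℕ),
    (∀ q, φ q < L) ∧
    (∀ q q', M q q' ≠ 0 → φ q ≤ φ q') ∧
    (∀ q q1 q2, M q q1 ≠ 0 → M q q2 ≠ 0 → φ q1 = φ q → φ q2 = φ q → q1 = q2) ∧
    (∀ n, u n = I ⬝ᵥ ((M ^ n) *ᵥ F))

section AuxLemmas
open Matrix

lemma downset_mem_iff (S : Finset ℕ) (hd : ∀ a b : ℕ, b ≤ a → a ∈ S → b ∈ S) (m : ℕ) :
    m ∈ S ↔ m < S.card := by
  constructor
  · intro hm
    have hsub : Finset.range (m + 1) ⊆ S := fun x hx =>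
      hd m x (Nat.lt_succ_iff.mp (Finset.mem_range.mp hx)) hm
    calc m < m + 1 := Nat.lt_succ_self m
      _ = (Finset.range (m + 1)).card := (Finset.card_range _).symm
      _ ≤ S.card := Finset.card_le_card hsub
  · intro hm
    by_contra hmem
    have hsub : S ⊆ Finset.range m := by
      intro x hx
      rw [Finset.mem_range]
      by_contra hx'
      exact hmem (hd x m (le_of_not_gt hx') hx)
    have := Finset.card_le_card hsub
    rw [Finset.card_range] at this
    omega

set_option synthInstance.maxHeartbeats 1000000 in
lemma ambiguity_le {d : ℕ} (M : Matrix (Fin d) (Fin d) ℚ) (I F : Fin d → ℚ) (φ : Fin d → ℕ)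
    (hmono : ∀ q q', M q q' ≠ 0 → φ q ≤ φ q')
    (hdet : ∀ q q1 q2, M q q1 ≠ 0 → M q q2 ≠ 0 → φ q1 = φ q → φ q2 = φ q → q1 = q2)
    (n : ℕ) : ambiguity M I F n ≤ d ^ d * (n + 2) ^ d := by
  classical
  -- extension of a run to ℕ
  set T := {r : Fin (n + 1) → Fin d // AcceptingRun M I F n r} with hT
  let R : T → ℕ → Fin d := fun r m => r.1 ⟨min m n, by omega⟩
  have hRle : ∀ (r : T) (m : ℕ) (hm : m ≤ n), R r m = r.1 ⟨m, by omega⟩ := by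
    intro r m hm
    simp only [R]
    congr 1
    exact Fin.ext (by simp [Nat.min_eq_left hm])
  have hstep : ∀ (r : T) (m : ℕ), m < n → M (R r m) (R r (m + 1)) ≠ 0 := by
    intro r m hm
    have := r.2.2.2 ⟨m, hm⟩
    rw [hRle r m (by omega), hRle r (m+1) (by omega)]
    convert this using 3 <;> rfl
  have hmonoR : ∀ (r : T), Monotone (fun m => φ (R r m)) := by
    intro r
    apply monotone_nat_of_le_succ
    intro m
    rcases lt_or_ge m n with hm | hm
    · exact hmono _ _ (hstep r m hm)
    · have hmin : min m n = min (m + 1) n := by omega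
      have : R r m = R r (m + 1) := by simp only [R, hmin]
      rw [this]
  -- the level-counting function
  let cnt : T → Fin d → ℕ := fun r q =>
    ((Finset.range (n + 1)).filter (fun m => φ (R r m) < φ q)).card
  have hcnt_iff : ∀ (r : T) (q : Fin d) (m : ℕ), m ≤ n → (φ (R r m) < φ q ↔ m < cnt r q) := by
    intro r q m hm
    have := downset_mem_iff ((Finset.range (n + 1)).filter (fun m => φ (R r m) < φ q))
      (by
        intro a b hba ha
        simp only [Finset.mem_filter, Finset.mem_range] at ha ⊢
        exact ⟨by omega, lt_of_le_of_lt (hmonoR r hba) ha.2⟩) m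
    simp only [Finset.mem_filter, Finset.mem_range] at this
    constructor
    · intro h; exact this.mp ⟨by omega, h⟩
    · intro h; exact (this.mpr h).2
  -- the encoding
  let enc : T → (Fin d → Fin (n + 2)) × (Fin d → Fin d) := fun r =>
    (fun q => ⟨cnt r q, by
      have : cnt r q ≤ n + 1 := le_trans (Finset.card_filter_le _ _) (by simp)
      omega⟩,
     fun q => if h : ∃ m, φ q ≤ φ (R r m) then R r (Nat.find h) else R r 0)
  have hinj : Function.Injective enc := by
    intro r r' he
    have hcnt_eq : ∀ q, cnt r q = cnt r' q := by
      intro q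
      have := congrFun (congrArg Prod.fst he) q
      simpa [enc, Fin.ext_iff] using this
    have hS_eq : ∀ q, (if h : ∃ m, φ q ≤ φ (R r m) then R r (Nat.find h) else R r 0)
        = (if h : ∃ m, φ q ≤ φ (R r' m) then R r' (Nat.find h) else R r' 0) := by
      intro q
      exact congrFun (congrArg Prod.snd he) q
    -- step A: levels agree
    have hlev : ∀ m, m ≤ n → φ (R r m) = φ (R r' m) := by
      intro m hm
      have h1 : ∀ q : Fin d, (φ (R r m) < φ q ↔ φ (R r' m) < φ q) := by
        intro q
        rw [hcnt_iff r q m hm, hcnt_iff r' q m hm, hcnt_eq]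
      have h2 := h1 (R r m)
      have h3 := h1 (R r' m)
      simp only [lt_self_iff_false, false_iff, iff_false, not_lt] at h2 h3
      omega
    -- step B: runs agree, by induction
    have hRB : ∀ m, m ≤ n → R r m = R r' m := by
      intro m
      induction m with
      | zero =>
        intro _
        have hq : ∃ m', φ (R r 0) ≤ φ (R r m') := ⟨0, le_refl _⟩
        have hq' : ∃ m', φ (R r 0) ≤ φ (R r' m') := ⟨0, by rw [← hlev 0 (by omega)]⟩
        have e1 : (if h : ∃ m', φ (R r 0) ≤ φ (R r m') then R r (Nat.find h) else R r 0)
            = R r 0 := by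
          rw [dif_pos hq]
          congr 1
          rw [Nat.find_eq_iff]
          exact ⟨le_refl _, by omega⟩
        have e2 : (if h : ∃ m', φ (R r 0) ≤ φ (R r' m') then R r' (Nat.find h) else R r' 0)
            = R r' 0 := by
          rw [dif_pos hq']
          congr 1
          rw [Nat.find_eq_iff]
          exact ⟨by rw [← hlev 0 (by omega)], by omega⟩
        rw [← e1, ← e2]
        exact hS_eq _
      | succ m ih =>
        intro hm
        have ihm := ih (by omega)
        have hmo : φ (R r m) ≤ φ (R r (m + 1)) := hmonoR r (Nat.le_succ m)
        rcases eq_or_lt_of_le hmo with heq | hlt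
        · -- same level: determinism
          have heq' : φ (R r' (m + 1)) = φ (R r' m) := by
            rw [← hlev m (by omega), ← hlev (m+1) hm, ← heq]
          have e1 := hstep r m (by omega)
          have e2 := hstep r' m (by omega)
          rw [← ihm] at e2
          exact hdet (R r m) _ _ e1 e2 heq.symm (by rw [heq']; rw [ihm])
        · -- level jump: use the S function at q = R r (m+1)
          set q := R r (m + 1) with hqdef
          have hq : ∃ m', φ q ≤ φ (R r m') := ⟨m + 1, le_refl _⟩
          have hq' : ∃ m', φ q ≤ φ (R r' m') := ⟨m + 1, by rw [← hlev (m+1) hm]⟩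
          have e1 : (if h : ∃ m', φ q ≤ φ (R r m') then R r (Nat.find h) else R r 0)
              = R r (m + 1) := by
            rw [dif_pos hq]
            congr 1
            rw [Nat.find_eq_iff]
            refine ⟨le_refl _, ?_⟩
            intro j hj
            push_neg
            calc φ (R r j) ≤ φ (R r m) := hmonoR r (by omega)
              _ < φ q := hlt
          have e2 : (if h : ∃ m', φ q ≤ φ (R r' m') then R r' (Nat.find h) else R r' 0)
              = R r' (m + 1) := by
            rw [dif_pos hq']
            congr 1
            rw [Nat.find_eq_iff]
            refine ⟨by rw [← hlev (m+1) hm], ?_⟩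
            intro j hj
            push_neg
            calc φ (R r' j) = φ (R r j) := (hlev j (by omega)).symm
              _ ≤ φ (R r m) := hmonoR r (by omega)
              _ < φ q := hlt
          have := hS_eq q
          rw [e1, e2] at this
          exact this
    -- conclude
    apply Subtype.ext
    funext i
    have h1 := hRB i.1 (by omega)
    rw [hRle r i.1 (by omega), hRle r' i.1 (by omega)] at h1
    convert h1 using 2 <;> exact (Fin.ext (by simp)).symm
  calc ambiguity M I F n ≤ Nat.card ((Fin d → Fin (n + 2)) × (Fin d → Fin d)) :=
        Nat.card_le_card_of_injective enc hinj
    _ = d ^ d * (n + 2) ^ d := by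
        rw [Nat.card_eq_fintype_card]
        simp [Fintype.card_fun, mul_comm]

lemma goodRec_congr {u v : ℕ → ℚ} (h : ∀ n, u n = v n) (hu : GoodRec u) : GoodRec v := by
  obtain ⟨Q, i1, i2, M, I, F, φ, L, h1, h2, h3, h4⟩ := hu
  exact ⟨Q, i1, i2, M, I, F, φ, L, h1, h2, h3, fun n => (h n) ▸ h4 n⟩

lemma goodRec_arith (a b : ℚ) (u : ℕ → ℚ) (h0 : u 0 = a) (hs : ∀ n, u (n + 1) = u n + b) :
    GoodRec u := by
  have hu : ∀ n, u n = a + n * b := by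
    intro n
    induction n with
    | zero => simpa using h0
    | succ n ih => rw [hs, ih]; push_cast; ring
  refine ⟨Fin 2, inferInstance, inferInstance, !![1, b; 0, 1], ![1, 0], ![a, 1],
    Fin.val, 2, ?_, ?_, ?_, ?_⟩
  · intro q; omega
  · intro q q' h
    fin_cases q <;> fin_cases q' <;> simp_all
  · intro q q1 q2 _ _ h1 h2
    exact Fin.ext (by omega)
  · intro n
    have hv : ∀ n : ℕ, ((!![1, b; 0, 1] : Matrix (Fin 2) (Fin 2) ℚ) ^ n) *ᵥ ![a, 1]
        = ![a + n * b, 1] := by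
      intro m
      induction m with
      | zero => simp [Matrix.one_mulVec]
      | succ m ih =>
        rw [pow_succ', ← Matrix.mulVec_mulVec, ih]
        funext i
        fin_cases i <;>
          simp [Matrix.mulVec, dotProduct, Fin.sum_univ_two] <;> push_cast <;> ring
    rw [hv, hu]
    simp [dotProduct, Fin.sum_univ_two]

lemma goodRec_geo (a l : ℚ) (u : ℕ → ℚ) (h0 : u 0 = a) (hs : ∀ n, u (n + 1) = l * u n) :
    GoodRec u := by
  have hu : ∀ n, u n = l ^ n * a := by
    intro n
    induction n with
    | zero => simpa using h0
    | succ n ih => rw [hs, ih, pow_succ]; ring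
  refine ⟨Unit, inferInstance, inferInstance, Matrix.of (fun _ _ => l), fun _ => 1,
    fun _ => a, fun _ => 0, 1, by simp, by simp, fun q q1 q2 _ _ _ _ => rfl, ?_⟩
  intro n
  have hv : ∀ m : ℕ, ((Matrix.of (fun _ _ => l) : Matrix Unit Unit ℚ) ^ m) *ᵥ (fun _ => a)
      = fun _ => l ^ m * a := by
    intro m
    induction m with
    | zero => simp [Matrix.one_mulVec]
    | succ m ih =>
      rw [pow_succ', ← Matrix.mulVec_mulVec, ih]
      funext i
      simp [Matrix.mulVec, dotProduct, pow_succ]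
      ring
  rw [hv, hu]
  simp [dotProduct]

lemma goodRec_sum {u v : ℕ → ℚ} (hu : GoodRec u) (hv : GoodRec v) :
    GoodRec (fun n => u n + v n) := by
  obtain ⟨Q1, i1, i2, M1, I1, F1, φ1, L1, hL1, hm1, hd1, hr1⟩ := hu
  obtain ⟨Q2, j1, j2, M2, I2, F2, φ2, L2, hL2, hm2, hd2, hr2⟩ := hv
  refine ⟨Q1 ⊕ Q2, inferInstance, inferInstance, Matrix.fromBlocks M1 0 0 M2,
    Sum.elim I1 I2, Sum.elim F1 F2,
    Sum.elim (fun q => 2 * φ1 q) (fun q => 2 * φ2 q + 1), 2 * L1 + 2 * L2 + 2,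
    ?_, ?_, ?_, ?_⟩
  · rintro (q | q) <;> simp only [Sum.elim_inl, Sum.elim_inr]
    · have := hL1 q; omega
    · have := hL2 q; omega
  · rintro (q | q) (q' | q') h <;>
      simp only [Matrix.fromBlocks_apply₁₁, Matrix.fromBlocks_apply₁₂,
        Matrix.fromBlocks_apply₂₁, Matrix.fromBlocks_apply₂₂, Matrix.zero_apply,
        ne_eq, not_true_eq_false] at h <;>
      simp only [Sum.elim_inl, Sum.elim_inr]
    · have := hm1 _ _ h; omega
    · have := hm2 _ _ h; omega
  · rintro (q | q) (q1 | q1) (q2 | q2) h1 h2 e1 e2 <;>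
      simp only [Matrix.fromBlocks_apply₁₁, Matrix.fromBlocks_apply₁₂,
        Matrix.fromBlocks_apply₂₁, Matrix.fromBlocks_apply₂₂, Matrix.zero_apply,
        ne_eq, not_true_eq_false] at h1 h2 <;>
      simp only [Sum.elim_inl, Sum.elim_inr] at e1 e2
    · exact congrArg Sum.inl (hd1 _ _ _ h1 h2 (by omega) (by omega))
    · exact congrArg Sum.inr (hd2 _ _ _ h1 h2 (by omega) (by omega))
  · intro n
    have hpow : ∀ m : ℕ, (Matrix.fromBlocks M1 0 0 M2) ^ m *ᵥ Sum.elim F1 F2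
        = Sum.elim ((M1 ^ m) *ᵥ F1) ((M2 ^ m) *ᵥ F2) := by
      intro m
      induction m with
      | zero => simp [Matrix.one_mulVec]
      | succ m ih =>
        rw [pow_succ', ← Matrix.mulVec_mulVec, ih, Matrix.fromBlocks_mulVec]
        simp [Matrix.mulVec_mulVec, ← pow_succ']
    rw [hpow]
    simp only [sumElim_dotProduct_sumElim]
    rw [hr1 n, hr2 n]

lemma goodRec_shift {u w : ℕ → ℚ} (a : ℚ) (hu : GoodRec u) (h0 : w 0 = a)
    (hs : ∀ n, w (n + 1) = u n) : GoodRec w := by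
  classical
  obtain ⟨Q1, i1, i2, M1, I1, F1, φ1, L1, hL1, hm1, hd1, hr1⟩ := hu
  set M : Matrix (Option Q1) (Option Q1) ℚ := fun x y =>
    match x, y with
    | none, none => 0
    | none, some q => I1 q
    | some _, none => 0
    | some q, some q' => M1 q q' with hM
  refine ⟨Option Q1, inferInstance, inferInstance, M,
    (fun x => match x with | none => 1 | some _ => 0),
    (fun x => match x with | none => a | some q => F1 q),
    (fun x => match x with | none => 0 | some q => φ1 q + 1), L1 + 1, ?_, ?_, ?_, ?_⟩
  · rintro (_ | q) <;> dsimp only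
    · omega
    · have := hL1 q; omega
  · rintro (_ | q) (_ | q') h <;> simp only [hM, ne_eq, not_true_eq_false] at h <;> dsimp only
    · omega
    · have := hm1 _ _ h; omega
  · rintro (_ | q) (_ | q1) (_ | q2) h1 h2 e1 e2 <;>
      simp only [hM] at h1 h2 <;> dsimp only at e1 e2 h1 h2 <;>
      first
      | exact absurd rfl h1
      | exact absurd rfl h2
      | omega
      | exact congrArg some (hd1 _ _ _ h1 h2 (by omega) (by omega))
  · have hvec : ∀ (m : ℕ) (q : Q1), ((M ^ m) *ᵥ (fun x => match x with
        | none => a | some q => F1 q)) (some q) = ((M1 ^ m) *ᵥ F1) q := by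
      intro m
      induction m with
      | zero => intro q; simp [Matrix.one_mulVec]
      | succ m ih =>
        intro q
        rw [pow_succ', ← Matrix.mulVec_mulVec, pow_succ', ← Matrix.mulVec_mulVec]
        set G := (M ^ m) *ᵥ (fun x => match x with | none => a | some q => F1 q) with hG
        set G1 := (M1 ^ m) *ᵥ F1 with hG1
        simp only [Matrix.mulVec, dotProduct, Fintype.sum_option]
        have h0' : M (some q) none = 0 := rfl
        rw [h0', zero_mul, zero_add]
        exact Finset.sum_congr rfl (fun q' _ => by rw [ih q'])
    intro n
    match n with
    | 0 =>
      simp only [pow_zero, Matrix.one_mulVec, dotProduct, Fintype.sum_option]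
      simp [h0]
    | n + 1 =>
      rw [hs n, hr1 n]
      rw [pow_succ', ← Matrix.mulVec_mulVec]
      set G := (M ^ n) *ᵥ (fun x => match x with | none => a | some q => F1 q) with hG
      simp only [Matrix.mulVec, dotProduct, Fintype.sum_option, zero_mul, one_mul,
        Finset.sum_const_zero, add_zero, zero_add]
      have h0' : M none none = 0 := rfl
      rw [h0', zero_mul, zero_add]
      refine Finset.sum_congr rfl (fun q _ => ?_)
      rw [hG, hvec n q, show M none (some q) = I1 q from rfl]
      rfl

lemma prodsum {Q1 Q2 : Type} [Fintype Q1] [Fintype Q2] (f : Q1 → ℚ) (g : Q2 → ℚ) :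
    ∑ x : Q1 × Q2, f x.1 * g x.2 = (∑ a, f a) * (∑ b, g b) := by
  rw [Finset.sum_mul_sum, Fintype.sum_prod_type]

lemma nat_mul_add_cancel {L a b a' b' : ℕ} (hb : b < L) (hb' : b' < L)
    (h : a * L + b = a' * L + b') : a = a' ∧ b = b' := by
  have hL : 0 < L := by omega
  have h1 : a = (a * L + b) / L := by
    rw [Nat.mul_comm, Nat.mul_add_div hL, Nat.div_eq_of_lt hb, Nat.add_zero]
  have h2 : a' = (a' * L + b') / L := by
    rw [Nat.mul_comm, Nat.mul_add_div hL, Nat.div_eq_of_lt hb', Nat.add_zero]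
  have ha : a = a' := by rw [h1, h2, h]
  subst ha
  omega

lemma goodRec_had {u v : ℕ → ℚ} (hu : GoodRec u) (hv : GoodRec v) :
    GoodRec (fun n => u n * v n) := by
  obtain ⟨Q1, i1, i2, M1, I1, F1, φ1, L1, hL1, hm1, hd1, hr1⟩ := hu
  obtain ⟨Q2, j1, j2, M2, I2, F2, φ2, L2, hL2, hm2, hd2, hr2⟩ := hv
  set M : Matrix (Q1 × Q2) (Q1 × Q2) ℚ := fun x y => M1 x.1 y.1 * M2 x.2 y.2 with hM
  have hvec : ∀ m : ℕ, (M ^ m) *ᵥ (fun x => F1 x.1 * F2 x.2)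
      = fun x => ((M1 ^ m) *ᵥ F1) x.1 * ((M2 ^ m) *ᵥ F2) x.2 := by
    intro m
    induction m with
    | zero => simp [Matrix.one_mulVec]
    | succ m ih =>
      rw [pow_succ', ← Matrix.mulVec_mulVec, ih]
      funext x
      rw [pow_succ', pow_succ', ← Matrix.mulVec_mulVec, ← Matrix.mulVec_mulVec]
      set G1 := (M1 ^ m) *ᵥ F1
      set G2 := (M2 ^ m) *ᵥ F2
      simp only [Matrix.mulVec, dotProduct, hM]
      rw [← prodsum (fun a => M1 x.1 a * G1 a) (fun b => M2 x.2 b * G2 b)]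
      exact Finset.sum_congr rfl (fun y _ => by ring)
  refine ⟨Q1 × Q2, inferInstance, inferInstance, M,
    (fun x => I1 x.1 * I2 x.2), (fun x => F1 x.1 * F2 x.2),
    (fun x => φ1 x.1 * L2 + φ2 x.2), L1 * L2, ?_, ?_, ?_, ?_⟩
  · intro x
    have h1 := hL1 x.1
    have h2 := hL2 x.2
    nlinarith
  · intro q q' h
    rw [hM] at h
    rcases mul_ne_zero_iff.mp h with ⟨ha, hb⟩
    have := hm1 _ _ ha
    have := hm2 _ _ hb
    have : φ1 q.1 * L2 ≤ φ1 q'.1 * L2 := Nat.mul_le_mul_right _ (by assumption)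
    dsimp only
    omega
  · intro q q1 q2 h1 h2 e1 e2
    rw [hM] at h1 h2
    rcases mul_ne_zero_iff.mp h1 with ⟨ha1, hb1⟩
    rcases mul_ne_zero_iff.mp h2 with ⟨ha2, hb2⟩
    dsimp only at e1 e2
    obtain ⟨ea1, eb1⟩ := nat_mul_add_cancel (hL2 q1.2) (hL2 q.2) e1
    obtain ⟨ea2, eb2⟩ := nat_mul_add_cancel (hL2 q2.2) (hL2 q.2) e2
    have := hd1 _ _ _ ha1 ha2 ea1 ea2
    have := hd2 _ _ _ hb1 hb2 eb1 eb2
    exact Prod.ext (by assumption) (by assumption)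
  · intro n
    rw [hvec]
    dsimp only
    rw [hr1 n, hr2 n]
    simp only [dotProduct]
    rw [← prodsum (fun a => I1 a * ((M1 ^ n) *ᵥ F1) a) (fun b => I2 b * ((M2 ^ n) *ᵥ F2) b)]
    exact Finset.sum_congr rfl (fun y _ => by ring)

lemma goodRec_stretch {u : ℕ → ℚ} (k i : ℕ) (hik : i < k) (hu : GoodRec u) :
    GoodRec (fun n => if n % k = i then u (n / k) else 0) := by
  classical
  have hk : 0 < k := by omega
  obtain ⟨Q1, i1, i2, M1, I1, F1, φ1, L1, hL1, hm1, hd1, hr1⟩ := hu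
  set j0 : Fin k := ⟨0, hk⟩ with hj0
  set M : Matrix (Fin k × Q1) (Fin k × Q1) ℚ := fun x y =>
    if (x.1 : ℕ) + 1 = k then (if (y.1 : ℕ) = 0 then M1 x.2 y.2 else 0)
    else (if (y.1 : ℕ) = (x.1 : ℕ) + 1 ∧ y.2 = x.2 then 1 else 0) with hM
  set F : Fin k × Q1 → ℚ := fun x => if (x.1 : ℕ) = i then F1 x.2 else 0 with hF
  have hvec : ∀ (m : ℕ) (x : Fin k × Q1), ((M ^ m) *ᵥ F) x =
      if ((x.1 : ℕ) + m) % k = i then ((M1 ^ (((x.1 : ℕ) + m) / k)) *ᵥ F1) x.2 else 0 := by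
    intro m
    induction m with
    | zero =>
      intro x
      rw [pow_zero, Matrix.one_mulVec, Nat.add_zero, Nat.mod_eq_of_lt x.1.isLt,
        Nat.div_eq_of_lt x.1.isLt, pow_zero, Matrix.one_mulVec, hF]
    | succ m ih =>
      intro x
      rw [pow_succ', ← Matrix.mulVec_mulVec]
      set G := (M ^ m) *ᵥ F with hG
      show ∑ y, M x y * G y = _
      by_cases hw : (x.1 : ℕ) + 1 = k
      · -- wrap step
        have hj : ∀ (j : Fin k) (q : Q1), M x (j, q) * G (j, q)
            = if j = j0 then M1 x.2 q * G (j0, q) else 0 := by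
          intro j q
          rw [hM]
          dsimp only
          rw [if_pos hw]
          by_cases hj : j = j0
          · subst hj
            rw [if_pos (by simp [hj0]), if_pos rfl]
          · rw [if_neg (fun h0 => hj (Fin.ext (by simpa [hj0] using h0))), if_neg hj, zero_mul]
        have hsum : ∑ y : Fin k × Q1, M x y * G y = ∑ q : Q1, M1 x.2 q * G (j0, q) := by
          rw [Fintype.sum_prod_type]
          rw [Finset.sum_eq_single_of_mem j0 (Finset.mem_univ _)]
          · exact Finset.sum_congr rfl (fun q _ => by rw [hj, if_pos rfl])
          · intro j _ hjne
            exact Finset.sum_eq_zero (fun q _ => by rw [hj, if_neg hjne])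
        rw [hsum]
        have hGj : ∀ q : Q1, G (j0, q)
            = if m % k = i then ((M1 ^ (m / k)) *ᵥ F1) q else 0 := by
          intro q
          rw [ih (j0, q)]
          simp [hj0]
        have e1 : (x.1 : ℕ) + (m + 1) = m + k := by omega
        rw [e1, Nat.add_mod_right, Nat.add_div_right _ hk]
        by_cases hc : m % k = i
        · rw [if_pos hc]
          have : ∑ q : Q1, M1 x.2 q * G (j0, q)
              = (M1 *ᵥ ((M1 ^ (m / k)) *ᵥ F1)) x.2 := by
            rw [Matrix.mulVec, dotProduct]
            exact Finset.sum_congr rfl (fun q _ => by rw [hGj, if_pos hc])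
          rw [this, Matrix.mulVec_mulVec, ← pow_succ']
        · rw [if_neg hc]
          exact Finset.sum_eq_zero (fun q _ => by rw [hGj, if_neg hc, mul_zero])
      · -- non-wrap step
        have hw' : (x.1 : ℕ) + 1 < k := lt_of_le_of_ne x.1.isLt hw
        set y0 : Fin k × Q1 := (⟨(x.1 : ℕ) + 1, hw'⟩, x.2) with hy0
        have hMx : ∀ y, M x y * G y = if y = y0 then G y0 else 0 := by
          intro y
          rw [hM]
          dsimp only
          rw [if_neg hw]
          by_cases hy : y = y0
          · subst hy
            rw [if_pos (by simp [hy0]), one_mul, if_pos rfl]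
          · rw [if_neg (fun hc : ((y.1 : ℕ) = (x.1 : ℕ) + 1 ∧ y.2 = x.2) =>
              hy (Prod.ext (Fin.ext (by simpa [hy0] using hc.1)) (by simpa [hy0] using hc.2))),
              zero_mul, if_neg hy]
        rw [Finset.sum_congr rfl (fun y _ => hMx y), Finset.sum_ite_eq' Finset.univ y0,
          if_pos (Finset.mem_univ _)]
        rw [ih y0]
        have e1 : ((y0.1 : ℕ) + m) = (x.1 : ℕ) + (m + 1) := by simp [hy0]; omega
        rw [e1]
  refine ⟨Fin k × Q1, inferInstance, inferInstance, M,
    (fun x => if (x.1 : ℕ) = 0 then I1 x.2 else 0), F,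
    (fun x => φ1 x.2), L1, fun q => hL1 q.2, ?_, ?_, ?_⟩
  · intro q q' h
    rw [hM] at h
    dsimp only at h ⊢
    split_ifs at h with h1 h2 h3
    · exact hm1 _ _ h
    · exact absurd rfl h
    · rw [h3.2]
    · exact absurd rfl h
  · intro q q1 q2 h1 h2 e1 e2
    rw [hM] at h1 h2
    dsimp only at h1 h2 e1 e2
    by_cases hw : (q.1 : ℕ) + 1 = k
    · rw [if_pos hw] at h1 h2
      split_ifs at h1 h2 with c1 c2
      · have := hd1 _ _ _ h1 h2 e1 e2
        exact Prod.ext (Fin.ext (by omega)) this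
      · exact absurd rfl h2
      · exact absurd rfl h1
      · exact absurd rfl h1
    · rw [if_neg hw] at h1 h2
      split_ifs at h1 h2 with c1 c2
      · exact Prod.ext (Fin.ext (by omega)) (by rw [c1.2, c2.2])
      · exact absurd rfl h2
      · exact absurd rfl h1
      · exact absurd rfl h1
  · intro n
    show (if n % k = i then u (n / k) else 0) = _
    rw [dotProduct]
    have hterm : ∀ x : Fin k × Q1,
        (if ((x.1 : ℕ) = 0) then I1 x.2 else 0) * ((M ^ n) *ᵥ F) x
        = if x.1 = j0 then I1 x.2 * ((M ^ n) *ᵥ F) (j0, x.2) else 0 := by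
      intro x
      by_cases hx : x.1 = j0
      · rw [if_pos (by simp [hx, hj0]), if_pos hx]
        have : x = (j0, x.2) := Prod.ext hx rfl
        rw [← this]
      · rw [if_neg (fun h0 => hx (Fin.ext (by simpa [hj0] using h0))), if_neg hx, zero_mul]
    rw [Finset.sum_congr rfl (fun x _ => hterm x)]
    rw [Fintype.sum_prod_type]
    rw [Finset.sum_eq_single_of_mem j0 (Finset.mem_univ _)]
    · by_cases hc : n % k = i
      · rw [if_pos hc, hr1 (n / k), dotProduct]
        refine Finset.sum_congr rfl (fun q _ => ?_)
        rw [hvec n (j0, q)]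
        simp [hj0, hc]
      · rw [if_neg hc]
        refine (Finset.sum_eq_zero (fun q _ => ?_)).symm
        rw [hvec n (j0, q)]
        simp [hj0, hc]
    · intro j _ hjne
      exact Finset.sum_eq_zero (fun q _ => by rw [if_neg hjne])

lemma goodRec_finsum : ∀ (m : ℕ) (vs : Fin m → ℕ → ℚ), (∀ i, GoodRec (vs i)) →
    GoodRec (fun n => ∑ i, vs i n) := by
  intro m
  induction m with
  | zero =>
    intro vs _
    exact goodRec_congr (fun n => by simp) (goodRec_arith 0 0 (fun _ => 0) rfl (by simp))
  | succ m ih =>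
    intro vs hvs
    have h1 := ih (fun i => vs i.castSucc) (fun i => hvs i.castSucc)
    have h2 := goodRec_sum h1 (hvs (Fin.last m))
    exact goodRec_congr (fun n => by rw [Fin.sum_univ_castSucc]) h2

lemma goodRec_shuffle (k : ℕ) (hk : 1 ≤ k) (us : Fin k → ℕ → ℚ) (w : ℕ → ℚ)
    (hw : ∀ (n : ℕ) (i : Fin k), w (k * n + (i : ℕ)) = us i n)
    (hus : ∀ i, GoodRec (us i)) : GoodRec w := by
  have hstr : ∀ i : Fin k, GoodRec (fun n => if n % k = (i : ℕ) then us i (n / k) else 0) :=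
    fun i => goodRec_stretch k i i.isLt (hus i)
  refine goodRec_congr (fun n => ?_) (goodRec_finsum k _ hstr)
  have hk0 : 0 < k := hk
  set i0 : Fin k := ⟨n % k, Nat.mod_lt n hk0⟩ with hi0
  have hterm : ∀ i : Fin k, (if n % k = (i : ℕ) then us i (n / k) else 0)
      = if i = i0 then us i0 (n / k) else 0 := by
    intro i
    by_cases hi : i = i0
    · subst hi
      rw [if_pos (by simp [hi0]), if_pos rfl]
    · rw [if_neg (fun hc => hi (Fin.ext (by simp [hi0, ← hc]))), if_neg hi]
  rw [Finset.sum_congr rfl (fun i _ => hterm i), Finset.sum_ite_eq' Finset.univ i0,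
    if_pos (Finset.mem_univ _)]
  have := hw (n / k) i0
  simp only [hi0] at this
  rw [Nat.div_add_mod n k] at this
  rw [this]


lemma goodRec_to_goal {u : ℕ → ℚ} (hg : GoodRec u) :
    ∃ (d : ℕ) (M : Matrix (Fin d) (Fin d) ℚ) (I F : Fin d → ℚ),
      Recognizes M I F u ∧ PolyAmbiguous M I F := by
  classical
  obtain ⟨Q, iF, iD, M, I, F, φ, L, hL, hmono, hdet, hrec⟩ := hg
  set d := Fintype.card Q with hd
  set e := Fintype.equivFin Q with he
  set M' : Matrix (Fin d) (Fin d) ℚ := Matrix.of (fun i j => M (e.symm i) (e.symm j)) with hM'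
  have hpow : ∀ n : ℕ, M' ^ n = Matrix.of (fun i j => (M ^ n) (e.symm i) (e.symm j)) := by
    intro n
    induction n with
    | zero =>
      ext i j
      simp [pow_zero, Matrix.of_apply, Matrix.one_apply, Equiv.apply_eq_iff_eq]
    | succ n ih =>
      ext i j
      rw [pow_succ, Matrix.mul_apply, ih]
      simp only [Matrix.of_apply, hM']
      rw [pow_succ, Matrix.mul_apply]
      exact Fintype.sum_equiv e.symm _ _ (fun x => rfl)
  refine ⟨d, M', fun i => I (e.symm i), fun i => F (e.symm i), ?_, ?_⟩
  · intro n
    rw [hrec n]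
    rw [dotProduct, dotProduct]
    refine (Fintype.sum_equiv e.symm _ _ (fun x => ?_)).symm
    congr 1
    rw [Matrix.mulVec, Matrix.mulVec, hpow n, dotProduct, dotProduct]
    exact Fintype.sum_equiv e.symm _ _ (fun y => rfl)
  · refine ⟨Polynomial.C (d ^ d) * (Polynomial.X + Polynomial.C 2) ^ d, fun n => ?_⟩
    have hb := ambiguity_le M' (fun i => I (e.symm i)) (fun i => F (e.symm i))
      (fun i => φ (e.symm i))
      (fun q q' h => hmono _ _ h)
      (fun q q1 q2 h1 h2 e1 e2 =>
        (Equiv.injective e.symm) (hdet _ _ _ h1 h2 e1 e2)) n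
    simpa using hb

end AuxLemmas

/-- Every sequence in PolyRat is recognized by a polynomially ambiguous
weighted automaton over a unary alphabet. -/
theorem polyRat_recognized_by_polyAmbiguous_wa (u : ℕ → ℚ) (hu : PolyRat u) :
    ∃ (d : ℕ) (M : Matrix (Fin d) (Fin d) ℚ) (I F : Fin d → ℚ),
      Recognizes M I F u ∧ PolyAmbiguous M I F := by
  apply goodRec_to_goal
  induction hu with
  | arith a b u h0 hs => exact goodRec_arith a b u h0 hs
  | geo a l u h0 hs => exact goodRec_geo a l u h0 hs
  | sum u v hu hv ihu ihv => exact goodRec_sum ihu ihv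
  | had u v hu hv ihu ihv => exact goodRec_had ihu ihv
  | shift a u w hu h0 hs ihu => exact goodRec_shift a ihu h0 hs
  | shuffle k hk us w hw hus ih => exact goodRec_shuffle k hk us w hw ih
end

section
/- The class of linear recurrence sequences over ℚ is the smallest class of sequences that contains all sequences of finite support and is closed under sum, Cauchy product, and Kleene star (where Kleene star u* = Σ_{n≥0} u^n, with u^n the n-fold Cauchy power, is applied only to sequences u with u_0 = 0). -/
/-- Cauchy product of sequences: `(u·v)_n = Σ_{p+q=n} u_p · v_q`. -/
def cauchyProd (u v : ℕ → ℚ) : ℕ → ℚ :=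
  fun n => ∑ p ∈ Finset.range (n + 1), u p * v (n - p)

/-- `m`-fold Cauchy power: `u^0 = (1,0,0,…)` and `u^(m+1) = u^m · u`. -/
def cauchyPow (u : ℕ → ℚ) : ℕ → (ℕ → ℚ)
  | 0 => fun n => if n = 0 then 1 else 0
  | m + 1 => cauchyProd (cauchyPow u m) u

/-- Kleene star of a sequence with `u 0 = 0`: `(u*)_n = Σ_{m≥0} (u^m)_n`, which is the
finite sum over `m ≤ n` since `(u^m)_n = 0` for `m > n`. -/
def kleeneStar (u : ℕ → ℚ) : ℕ → ℚ :=
  fun n => ∑ m ∈ Finset.range (n + 1), cauchyPow u m n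

/-- The smallest class of sequences containing all finitely supported sequences and
closed under sum, Cauchy product, and Kleene star (applied only to sequences whose
first entry is 0). -/
inductive RatClass : (ℕ → ℚ) → Prop where
  | fin (u : ℕ → ℚ) (h : (Function.support u).Finite) : RatClass u
  | sum (u v : ℕ → ℚ) (hu : RatClass u) (hv : RatClass v) : RatClass (fun n => u n + v n)
  | cauchy (u v : ℕ → ℚ) (hu : RatClass u) (hv : RatClass v) : RatClass (cauchyProd u v)
  | star (u : ℕ → ℚ) (h0 : u 0 = 0) (hu : RatClass u) : RatClass (kleeneStar u)

open PowerSeries Finset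

/-- A power series is "polynomial": coefficients vanish from some point on. -/
def PFin (f : PowerSeries ℚ) : Prop := ∃ N : ℕ, ∀ n, N ≤ n → PowerSeries.coeff (R := ℚ) n f = 0

lemma coeff_mul_range (f g : PowerSeries ℚ) (n : ℕ) :
    PowerSeries.coeff (R := ℚ) n (f * g) =
      ∑ p ∈ Finset.range (n + 1),
        PowerSeries.coeff (R := ℚ) p f * PowerSeries.coeff (R := ℚ) (n - p) g := by
  rw [PowerSeries.coeff_mul, Finset.Nat.sum_antidiagonal_eq_sum_range_succ_mk]

lemma PFin.one : PFin 1 := ⟨1, fun n hn => by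
  rw [PowerSeries.coeff_one, if_neg (by omega)]⟩

lemma PFin.add {f g : PowerSeries ℚ} (hf : PFin f) (hg : PFin g) : PFin (f + g) := by
  obtain ⟨N, hN⟩ := hf; obtain ⟨M, hM⟩ := hg
  exact ⟨N + M, fun n hn => by rw [map_add, hN n (by omega), hM n (by omega), add_zero]⟩

lemma PFin.sub {f g : PowerSeries ℚ} (hf : PFin f) (hg : PFin g) : PFin (f - g) := by
  obtain ⟨N, hN⟩ := hf; obtain ⟨M, hM⟩ := hg
  exact ⟨N + M, fun n hn => by rw [map_sub, hN n (by omega), hM n (by omega), sub_zero]⟩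

lemma PFin.mul {f g : PowerSeries ℚ} (hf : PFin f) (hg : PFin g) : PFin (f * g) := by
  obtain ⟨N, hN⟩ := hf; obtain ⟨M, hM⟩ := hg
  refine ⟨N + M, fun n hn => ?_⟩
  rw [coeff_mul_range]
  apply Finset.sum_eq_zero
  intro p hp
  have hp' : p ≤ n := by simpa [Nat.lt_succ_iff] using hp
  rcases le_or_gt N p with h | h
  · rw [hN p h, zero_mul]
  · rw [hM (n - p) (by omega), mul_zero]

lemma mk_add (u v : ℕ → ℚ) :
    PowerSeries.mk (fun n => u n + v n) = PowerSeries.mk u + PowerSeries.mk v := by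
  ext n; simp

lemma mk_cauchyProd (u v : ℕ → ℚ) :
    PowerSeries.mk (cauchyProd u v) = PowerSeries.mk u * PowerSeries.mk v := by
  ext n
  rw [coeff_mul_range, PowerSeries.coeff_mk]
  simp [cauchyProd]

lemma mk_cauchyPow (u : ℕ → ℚ) (m : ℕ) :
    PowerSeries.mk (cauchyPow u m) = (PowerSeries.mk u) ^ m := by
  induction m with
  | zero =>
    ext n
    simp [cauchyPow, PowerSeries.coeff_one]
  | succ m ih =>
    show PowerSeries.mk (cauchyProd (cauchyPow u m) u) = _
    rw [mk_cauchyProd, ih, pow_succ]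

lemma cauchyPow_eq_zero {u : ℕ → ℚ} (h0 : u 0 = 0) :
    ∀ m n, n < m → cauchyPow u m n = 0 := by
  intro m
  induction m with
  | zero => intro n hn; omega
  | succ m ih =>
    intro n hn
    show cauchyProd (cauchyPow u m) u n = 0
    apply Finset.sum_eq_zero
    intro p hp
    have hp' : p ≤ n := by simpa [Nat.lt_succ_iff] using hp
    rcases lt_or_ge p m with h | h
    · rw [ih p h, zero_mul]
    · have : p = n ∧ n = m := by omega
      rw [this.1, Nat.sub_self, h0, mul_zero]

lemma star_mul {u : ℕ → ℚ} (h0 : u 0 = 0) :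
    (1 - PowerSeries.mk u) * PowerSeries.mk (kleeneStar u) = 1 := by
  ext n
  rw [sub_mul, one_mul, map_sub]
  have hstar : ∀ q : ℕ, PowerSeries.coeff (R := ℚ) q (PowerSeries.mk (kleeneStar u))
      = ∑ m ∈ Finset.range (q + 1), PowerSeries.coeff (R := ℚ) q ((PowerSeries.mk u) ^ m) := by
    intro q
    rw [PowerSeries.coeff_mk, kleeneStar]
    exact Finset.sum_congr rfl fun m _ => by rw [← mk_cauchyPow, PowerSeries.coeff_mk]
  have hmulstar : PowerSeries.coeff (R := ℚ) n (PowerSeries.mk u * PowerSeries.mk (kleeneStar u))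
      = ∑ m ∈ Finset.range (n + 1), PowerSeries.coeff (R := ℚ) n ((PowerSeries.mk u) ^ (m + 1)) := by
    rw [coeff_mul_range]
    have step : ∀ p ∈ Finset.range (n + 1),
        PowerSeries.coeff (R := ℚ) p (PowerSeries.mk u) *
          PowerSeries.coeff (R := ℚ) (n - p) (PowerSeries.mk (kleeneStar u))
        = ∑ m ∈ Finset.range (n + 1), PowerSeries.coeff (R := ℚ) p (PowerSeries.mk u) *
            PowerSeries.coeff (R := ℚ) (n - p) ((PowerSeries.mk u) ^ m) := by
      intro p hp
      have hp' : p ≤ n := by simpa [Nat.lt_succ_iff] using hp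
      rw [hstar, Finset.mul_sum]
      apply Finset.sum_subset
      · intro x hx
        simp only [Finset.mem_range] at hx ⊢
        omega
      · intro x _ hx
        simp only [Finset.mem_range, not_lt] at hx
        rw [← mk_cauchyPow, PowerSeries.coeff_mk, PowerSeries.coeff_mk,
          cauchyPow_eq_zero h0 x (n - p) (by omega), mul_zero]
    rw [Finset.sum_congr rfl step, Finset.sum_comm]
    apply Finset.sum_congr rfl
    intro m _
    rw [pow_succ' (PowerSeries.mk u) m, coeff_mul_range]
  rw [hmulstar, hstar]
  have htel : ∑ m ∈ Finset.range (n + 1),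
        (PowerSeries.coeff (R := ℚ) n ((PowerSeries.mk u) ^ m)
          - PowerSeries.coeff (R := ℚ) n ((PowerSeries.mk u) ^ (m + 1)))
      = PowerSeries.coeff (R := ℚ) n ((PowerSeries.mk u) ^ 0)
        - PowerSeries.coeff (R := ℚ) n ((PowerSeries.mk u) ^ (n + 1)) := by
    exact Finset.sum_range_sub' (fun m => PowerSeries.coeff (R := ℚ) n ((PowerSeries.mk u) ^ m)) (n + 1)
  have hz : PowerSeries.coeff (R := ℚ) n ((PowerSeries.mk u) ^ (n + 1)) = 0 := by
    rw [← mk_cauchyPow, PowerSeries.coeff_mk]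
    exact cauchyPow_eq_zero h0 (n + 1) n (by omega)
  rw [← Finset.sum_sub_distrib, htel, hz, sub_zero, pow_zero]

/-- generating-function characterization -/
def GoodGF (u : ℕ → ℚ) : Prop :=
  ∃ q : PowerSeries ℚ, PowerSeries.constantCoeff (R := ℚ) q = 1 ∧ PFin q ∧ PFin (q * PowerSeries.mk u)

lemma goodGF_of_isLRS {u : ℕ → ℚ} (h : IsLRS u) : GoodGF u := by
  obtain ⟨k, hk, a, hrec⟩ := h
  refine ⟨1 - ∑ i : Fin k, PowerSeries.monomial (R := ℚ) ((i : ℕ) + 1) (a i), ?_, ?_, ?_⟩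
  · rw [map_sub, map_sum, map_one]
    have : ∀ i : Fin k, PowerSeries.constantCoeff (R := ℚ)
        (PowerSeries.monomial (R := ℚ) ((i : ℕ) + 1) (a i)) = 0 := by
      intro i
      rw [← PowerSeries.coeff_zero_eq_constantCoeff_apply, PowerSeries.coeff_monomial,
        if_neg (by omega)]
    rw [Finset.sum_congr rfl fun i _ => this i, Finset.sum_const_zero, sub_zero]
  · refine ⟨k + 1, fun n hn => ?_⟩
    rw [map_sub, map_sum, PowerSeries.coeff_one, if_neg (by omega)]
    have : ∀ i : Fin k, PowerSeries.coeff (R := ℚ) n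
        (PowerSeries.monomial (R := ℚ) ((i : ℕ) + 1) (a i)) = 0 := by
      intro i
      rw [PowerSeries.coeff_monomial, if_neg (by have := i.isLt; omega)]
    rw [Finset.sum_congr rfl fun i _ => this i, Finset.sum_const_zero, zero_sub, neg_zero]
  · refine ⟨k, fun m hm => ?_⟩
    rw [sub_mul, one_mul, Finset.sum_mul, map_sub, map_sum, PowerSeries.coeff_mk]
    have hmono : ∀ i : Fin k, PowerSeries.coeff (R := ℚ) m
        (PowerSeries.monomial (R := ℚ) ((i : ℕ) + 1) (a i) * PowerSeries.mk u)
        = a i * u (m - ((i : ℕ) + 1)) := by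
      intro i
      rw [coeff_mul_range]
      rw [Finset.sum_eq_single ((i : ℕ) + 1)]
      · rw [PowerSeries.coeff_monomial_same, PowerSeries.coeff_mk]
      · intro b _ hb
        rw [PowerSeries.coeff_monomial, if_neg hb, zero_mul]
      · intro hmem
        exfalso
        apply hmem
        simp only [Finset.mem_range]
        have := i.isLt; omega
    rw [Finset.sum_congr rfl fun i _ => hmono i]
    have := hrec (m - k)
    rw [Nat.sub_add_cancel hm] at this
    rw [this]
    rw [Finset.sum_congr rfl (g := fun i : Fin k => a i * u (m - ((i : ℕ) + 1)))
      (fun i _ => by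
        congr 1
        congr 1
        have := i.isLt; omega), sub_self]

lemma isLRS_of_goodGF {u : ℕ → ℚ} (h : GoodGF u) : IsLRS u := by
  obtain ⟨q, h1, ⟨N, hN⟩, ⟨M, hM⟩⟩ := h
  set k := N + M + 1 with hkdef
  refine ⟨k, by omega, fun i => -(PowerSeries.coeff (R := ℚ) ((i : ℕ) + 1) q), fun n => ?_⟩
  have h0 := hM (n + k) (by omega)
  rw [coeff_mul_range, Finset.sum_range_succ'] at h0
  -- h0 : ∑ p ∈ range (n+k), coeff (p+1) q * u (n+k-(p+1)) + coeff 0 q * u (n+k-0) = 0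
  rw [PowerSeries.coeff_zero_eq_constantCoeff_apply, h1, Nat.sub_zero, one_mul] at h0
  have hsub : ∑ p ∈ Finset.range (n + k),
      PowerSeries.coeff (R := ℚ) (p + 1) q * PowerSeries.coeff (R := ℚ) (n + k - (p + 1)) (PowerSeries.mk u)
      = ∑ p ∈ Finset.range k,
      PowerSeries.coeff (R := ℚ) (p + 1) q * PowerSeries.coeff (R := ℚ) (n + k - (p + 1)) (PowerSeries.mk u) := by
    symm
    apply Finset.sum_subset
    · intro x hx
      simp only [Finset.mem_range] at hx ⊢
      omega
    · intro x _ hx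
      simp only [Finset.mem_range, not_lt] at hx
      rw [hN (x + 1) (by omega), zero_mul]
  rw [hsub] at h0
  have := Fin.sum_univ_eq_sum_range
    (fun p => PowerSeries.coeff (R := ℚ) (p + 1) q * PowerSeries.coeff (R := ℚ) (n + k - (p + 1))
      (PowerSeries.mk u)) k
  rw [← this] at h0
  have harg : ∀ i : Fin k, n + k - ((i : ℕ) + 1) = n + (k - 1 - (i : ℕ)) := by
    intro i; have := i.isLt; omega
  simp only [PowerSeries.coeff_mk] at h0
  have hR : ∑ i : Fin k, -(PowerSeries.coeff (R := ℚ) ((i : ℕ) + 1) q) * u (n + (k - 1 - (i : ℕ)))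
      = -∑ i : Fin k, PowerSeries.coeff (R := ℚ) ((i : ℕ) + 1) q * u (n + k - ((i : ℕ) + 1)) := by
    rw [← Finset.sum_neg_distrib]
    exact Finset.sum_congr rfl fun i _ => by rw [neg_mul, harg i]
  show u (n + k) = _
  rw [hR]
  linarith

lemma pfin_mk_of_finite {u : ℕ → ℚ} (h : (Function.support u).Finite) :
    PFin (PowerSeries.mk u) := by
  obtain ⟨N, hN⟩ := h.bddAbove
  refine ⟨N + 1, fun n hn => ?_⟩
  rw [PowerSeries.coeff_mk]
  by_contra hcon
  exact absurd (hN (Function.mem_support.mpr hcon)) (by omega)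

lemma goodGF_of_ratClass {u : ℕ → ℚ} (h : RatClass u) : GoodGF u := by
  induction h with
  | fin u h =>
    exact ⟨1, map_one _, PFin.one, by rw [one_mul]; exact pfin_mk_of_finite h⟩
  | sum u v hu hv ihu ihv =>
    obtain ⟨q1, hq1, hf1, hp1⟩ := ihu
    obtain ⟨q2, hq2, hf2, hp2⟩ := ihv
    refine ⟨q1 * q2, by rw [map_mul, hq1, hq2, one_mul], hf1.mul hf2, ?_⟩
    rw [mk_add, show q1 * q2 * (PowerSeries.mk u + PowerSeries.mk v)
      = q2 * (q1 * PowerSeries.mk u) + q1 * (q2 * PowerSeries.mk v) by ring]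
    exact (hf2.mul hp1).add (hf1.mul hp2)
  | cauchy u v hu hv ihu ihv =>
    obtain ⟨q1, hq1, hf1, hp1⟩ := ihu
    obtain ⟨q2, hq2, hf2, hp2⟩ := ihv
    refine ⟨q1 * q2, by rw [map_mul, hq1, hq2, one_mul], hf1.mul hf2, ?_⟩
    rw [mk_cauchyProd, show q1 * q2 * (PowerSeries.mk u * PowerSeries.mk v)
      = (q1 * PowerSeries.mk u) * (q2 * PowerSeries.mk v) by ring]
    exact hp1.mul hp2
  | star u h0 hu ihu =>
    obtain ⟨q, hq, hf, hp⟩ := ihu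
    refine ⟨q * (1 - PowerSeries.mk u), ?_, ?_, ?_⟩
    · rw [map_mul, hq, map_sub, map_one, PowerSeries.constantCoeff_mk, h0, sub_zero, one_mul]
    · rw [mul_sub, mul_one]
      exact hf.sub hp
    · rw [mul_assoc, star_mul h0, mul_one]
      exact hf

lemma ratClass_of_isLRS {u : ℕ → ℚ} (h : IsLRS u) : RatClass u := by
  obtain ⟨q, h1, ⟨N, hN⟩, ⟨M, hM⟩⟩ := goodGF_of_isLRS h
  set w : ℕ → ℚ := fun n => PowerSeries.coeff (R := ℚ) n (1 - q) with hw
  set p : ℕ → ℚ := fun n => PowerSeries.coeff (R := ℚ) n (q * PowerSeries.mk u) with hpdef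
  have hw0 : w 0 = 0 := by
    rw [hw]
    simp only [map_sub, PowerSeries.coeff_zero_eq_constantCoeff_apply, map_one, h1, sub_self]
  have hwfin : (Function.support w).Finite := by
    apply Set.Finite.subset (Set.finite_Iio (N + 1))
    intro n hn
    simp only [Set.mem_Iio]
    by_contra hcon
    apply hn
    rw [hw]
    simp only [map_sub, PowerSeries.coeff_one, if_neg (show ¬ n = 0 by omega),
      hN n (by omega), sub_zero]
  have hpfin : (Function.support p).Finite := by
    apply Set.Finite.subset (Set.finite_Iio M)
    intro n hn
    simp only [Set.mem_Iio]
    by_contra hcon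
    exact hn (hM n (by omega))
  have hmkw : PowerSeries.mk w = 1 - q := by ext n; rw [PowerSeries.coeff_mk]
  have hmkp : PowerSeries.mk p = q * PowerSeries.mk u := by ext n; rw [PowerSeries.coeff_mk]
  have hqS : q * PowerSeries.mk (kleeneStar w) = 1 := by
    have := star_mul hw0
    rwa [hmkw, sub_sub_cancel] at this
  have hueq : u = cauchyProd p (kleeneStar w) := by
    have : PowerSeries.mk u = PowerSeries.mk (cauchyProd p (kleeneStar w)) := by
      rw [mk_cauchyProd, hmkp, show q * PowerSeries.mk u * PowerSeries.mk (kleeneStar w)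
        = PowerSeries.mk u * (q * PowerSeries.mk (kleeneStar w)) by ring, hqS, mul_one]
    funext n
    have := congrArg (PowerSeries.coeff (R := ℚ) n) this
    rwa [PowerSeries.coeff_mk, PowerSeries.coeff_mk] at this
  rw [hueq]
  exact RatClass.cauchy _ _ (RatClass.fin _ hpfin)
    (RatClass.star _ hw0 (RatClass.fin _ hwfin))

/-- The class of linear recurrence sequences over ℚ is the smallest class of
sequences containing all sequences of finite support and closed under sum, Cauchy
product, and Kleene star. -/
theorem isLRS_iff_ratClass (u : ℕ → ℚ) : IsLRS u ↔ RatClass u :=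
  ⟨ratClass_of_isLRS, fun h => isLRS_of_goodGF (goodGF_of_ratClass h)⟩
end

section
/- Let Q ∈ ℚ[x] be a nonzero polynomial with Q(0) ≠ 0 such that every complex root of Q is a root of a rational number. Then Q divides in ℚ[x] some product ∏_{i=1}^m (1 − λ_i·x^{ℓ_i}) with λ_i ∈ ℚ and integers ℓ_i ≥ 1. -/
open Polynomial

private lemma list_prod_bridge {α : Type*} [CommMonoid α] (L : List ℂ) (g : ℂ → α) :
    (L.map g).prod = ∏ i : Fin L.length, g (L.get i) := by
  conv_lhs => rw [← List.ofFn_get L, List.map_ofFn]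
  rw [List.prod_ofFn]; rfl

/-- If `Q ∈ ℚ[x]` is nonzero, `Q(0) ≠ 0`, and every complex root of `Q` is a
root of a rational number, then `Q` divides in `ℚ[x]` some product
`∏_{i=1}^m (1 − λ_i·x^{ℓ_i})` with `λ_i ∈ ℚ` and integers `ℓ_i ≥ 1`. -/
theorem rootOfRational_poly_dvd_product (Q : Polynomial ℚ) (hQ : Q ≠ 0)
    (h0 : Q.eval 0 ≠ 0)
    (hroots : ∀ z : ℂ, Polynomial.aeval z Q = 0 → IsRootOfRational z) :
    ∃ (m : ℕ) (lam : Fin m → ℚ) (l : Fin m → ℕ), (∀ i, 1 ≤ l i) ∧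
      Q ∣ ∏ i : Fin m, (1 - Polynomial.C (lam i) * Polynomial.X ^ (l i)) := by
  classical
  set f := algebraMap ℚ ℂ with hf
  set Q' : Polynomial ℚ := Q * C (Q.leadingCoeff)⁻¹ with hQ'def
  have hmonic : Q'.Monic := monic_mul_leadingCoeff_inv hQ
  have hQdvd : Q ∣ Q' := Dvd.intro _ rfl
  have hmapmonic : (Q'.map f).Monic := hmonic.map f
  have hsplits : Splits (Q'.map f) := IsAlgClosed.splits _
  have hprod : Q'.map f = ((Q'.map f).roots.map fun a => X - C a).prod :=
    hsplits.eq_prod_roots_of_monic hmapmonic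
  set L : List ℂ := (Q'.map f).roots.toList with hL
  have hLs : (L : Multiset ℂ) = (Q'.map f).roots := Multiset.coe_toList _
  -- every element of L is a root of Q (over ℂ), and nonzero
  have hmem : ∀ z ∈ L, Polynomial.aeval z Q = 0 ∧ z ≠ 0 := by
    intro z hz
    have hz' : z ∈ (Q'.map f).roots := by rw [← hLs]; exact_mod_cast hz
    have hroot : (Q'.map f).IsRoot z := isRoot_of_mem_roots hz'
    have heval : Polynomial.aeval z Q' = 0 := by
      rwa [aeval_def, ← eval_map]
    have hQz : Polynomial.aeval z Q = 0 := by
      have : Polynomial.aeval z Q * f (Q.leadingCoeff)⁻¹ = 0 := by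
        have h2 := heval
        rw [hQ'def, map_mul, aeval_C] at h2
        exact h2
      have hne : f (Q.leadingCoeff)⁻¹ ≠ 0 := by
        simpa [hf] using inv_ne_zero (leadingCoeff_ne_zero.mpr hQ)
      exact (mul_eq_zero.mp this).resolve_right hne
    refine ⟨hQz, ?_⟩
    intro h0z
    apply h0
    have : Polynomial.aeval (0 : ℂ) Q = 0 := h0z ▸ hQz
    rw [aeval_def, eval₂_at_zero] at this
    exact (_root_.map_eq_zero (algebraMap ℚ ℂ)).mp (by simpa [coeff_zero_eq_eval_zero] using this)
  set m := L.length with hm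
  set z : Fin m → ℂ := L.get with hzdef
  have hzmem : ∀ i, z i ∈ L := fun i => L.get_mem _
  -- choose exponents and rationals
  have hchoice : ∀ i : Fin m, ∃ p : ℕ × ℚ, 1 ≤ p.1 ∧ p.2 ≠ 0 ∧ (z i) ^ p.1 = (p.2 : ℂ) := by
    intro i
    obtain ⟨hQz, hz0⟩ := hmem (z i) (hzmem i)
    obtain ⟨n, hn, q, hq⟩ := hroots (z i) hQz
    refine ⟨(n, q), hn, ?_, hq⟩
    show q ≠ 0
    intro hq0
    apply pow_ne_zero n hz0
    rw [hq, hq0]; simp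
  choose p hp1 hp2 hp3 using hchoice
  refine ⟨m, fun i => (p i).2⁻¹, fun i => (p i).1, fun i => hp1 i, ?_⟩
  -- reduce to Q' and map to ℂ
  refine hQdvd.trans ?_
  rw [← map_dvd_map f (algebraMap ℚ ℂ).injective hmonic, Polynomial.map_prod]
  rw [hprod, ← hLs]
  rw [Multiset.map_coe, Multiset.prod_coe, list_prod_bridge]
  apply Finset.prod_dvd_prod_of_dvd
  intro i _
  rw [dvd_iff_isRoot]
  have hq0 : ((p i).2 : ℂ) ≠ 0 := by exact_mod_cast hp2 i
  simp only [Polynomial.map_sub, Polynomial.map_one, Polynomial.map_mul, Polynomial.map_pow,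
    map_C, map_X, IsRoot.def, eval_sub, eval_one, eval_mul, eval_C, eval_pow, eval_X]
  show (1 : ℂ) - f ((p i).2)⁻¹ * (z i) ^ (p i).1 = 0
  rw [hp3 i]
  simp [hf, hq0]
end

section
/- Let P, Q ∈ ℚ[x] with Q(0) ≠ 0 and suppose every complex root of Q is a root of a rational number. Then there exist finitely many rational polynomials R_1,…,R_m, rationals λ_1,…,λ_m, and integers ℓ_i ≥ 1, k_i ≥ 1 such that, in ℚ[[x]], P·Q⁻¹ = Σ_{i=1}^m R_i·((1 − λ_i·x^{ℓ_i})^{k_i})⁻¹, where the inverses are taken in the ring of formal power series ℚ[[x]]. -/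
open Polynomial PowerSeries

/-- The class of power series expressible in the desired form. -/
def GoodPS (f : PowerSeries ℚ) : Prop :=
  ∃ (m : ℕ) (R : Fin m → Polynomial ℚ) (lam : Fin m → ℚ) (l kk : Fin m → ℕ),
    (∀ i, 1 ≤ l i) ∧ (∀ i, 1 ≤ kk i) ∧
    f = ∑ i : Fin m, (R i : PowerSeries ℚ) *
      ((1 - PowerSeries.C (lam i) * PowerSeries.X ^ (l i)) ^ (kk i))⁻¹

lemma goodPS_single (R : Polynomial ℚ) (lam : ℚ) (l kk : ℕ) (hl : 1 ≤ l) (hk : 1 ≤ kk) :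
    GoodPS ((R : PowerSeries ℚ) *
      ((1 - PowerSeries.C lam * PowerSeries.X ^ l) ^ kk)⁻¹) := by
  exact ⟨1, fun _ => R, fun _ => lam, fun _ => l, fun _ => kk,
    fun _ => hl, fun _ => hk, by simp⟩

lemma goodPS_poly (R : Polynomial ℚ) : GoodPS (R : PowerSeries ℚ) := by
  have := goodPS_single R 0 1 1 le_rfl le_rfl
  simpa using this

lemma goodPS_add {f g : PowerSeries ℚ} (hf : GoodPS f) (hg : GoodPS g) : GoodPS (f + g) := by
  obtain ⟨m1, R1, lam1, l1, k1, hl1, hk1, he1⟩ := hf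
  obtain ⟨m2, R2, lam2, l2, k2, hl2, hk2, he2⟩ := hg
  refine ⟨m1 + m2, Fin.append R1 R2, Fin.append lam1 lam2, Fin.append l1 l2,
    Fin.append k1 k2, ?_, ?_, ?_⟩
  · intro i
    refine Fin.addCases (fun j => ?_) (fun j => ?_) i
    · simpa using hl1 j
    · simpa using hl2 j
  · intro i
    refine Fin.addCases (fun j => ?_) (fun j => ?_) i
    · simpa using hk1 j
    · simpa using hk2 j
  · rw [he1, he2, Fin.sum_univ_add]
    simp

lemma constCoeff_coe_ne (p : Polynomial ℚ) (h : p.eval 0 ≠ 0) :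
    PowerSeries.constantCoeff (p : PowerSeries ℚ) ≠ 0 := by
  rwa [Polynomial.constantCoeff_coe, Polynomial.coeff_zero_eq_eval_zero]

/-- Main induction. -/
lemma main_aux : ∀ (n : ℕ) (Q : Polynomial ℚ), Q.natDegree ≤ n → Q.eval 0 ≠ 0 →
    (∀ z : ℂ, Polynomial.aeval z Q = 0 → IsRootOfRational z) →
    ∀ P : Polynomial ℚ, GoodPS ((P : PowerSeries ℚ) * (Q : PowerSeries ℚ)⁻¹) := by
  intro n
  induction n using Nat.strong_induction_on with
  | _ n ih =>
  intro Q hdeg h0 hroots P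
  rcases Nat.eq_zero_or_pos Q.natDegree with hQ0 | hQpos
  · -- constant case
    have hc : Q = Polynomial.C (Q.coeff 0) := eq_C_of_natDegree_eq_zero hQ0
    have hc0 : Q.coeff 0 ≠ 0 := by
      rwa [Polynomial.coeff_zero_eq_eval_zero]
    have : (P : PowerSeries ℚ) * (Q : PowerSeries ℚ)⁻¹
        = ((Polynomial.C (Q.coeff 0)⁻¹ * P : Polynomial ℚ) : PowerSeries ℚ) := by
      rw [hc]
      push_cast
      rw [PowerSeries.C_inv]
      simp only [Polynomial.coeff_C_zero]
      ring
    rw [this]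
    exact goodPS_poly _
  · -- Q nonconstant
    have hQne : Q ≠ 0 := fun h => h0 (by simp [h])
    have hQnu : ¬IsUnit Q := by
      intro h
      rw [Polynomial.isUnit_iff] at h
      obtain ⟨r, _, rfl⟩ := h
      simp at hQpos
    obtain ⟨p, hpirr, hpdvd⟩ := WfDvdMonoid.exists_irreducible_factor hQnu hQne
    have hfin : FiniteMultiplicity p Q := FiniteMultiplicity.of_not_isUnit hpirr.not_isUnit hQne
    obtain ⟨Q₁, hQ1, hpQ1⟩ := hfin.exists_eq_pow_mul_and_not_dvd
    set k := multiplicity p Q with hk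
    have hk1 : 1 ≤ k :=
      hfin.le_multiplicity_of_pow_dvd (k := 1) (by simpa using hpdvd)
    have hpne : p ≠ 0 := hpirr.ne_zero
    have hQ1ne : Q₁ ≠ 0 := by
      intro h; rw [h, mul_zero] at hQ1; exact hQne hQ1
    -- evals at 0
    have heval : Q.eval 0 = (p.eval 0) ^ k * Q₁.eval 0 := by
      rw [hQ1]; simp
    have hp0 : p.eval 0 ≠ 0 := fun h =>
      h0 (by rw [heval, h, zero_pow (by omega), zero_mul])
    have hQ10 : Q₁.eval 0 ≠ 0 := fun h => h0 (by rw [heval, h, mul_zero])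
    -- degree bound
    have hpdeg : 0 < p.natDegree := hpirr.natDegree_pos
    have hdegQ1 : Q₁.natDegree < n := by
      have hmul : 1 * 1 ≤ k * p.natDegree := Nat.mul_le_mul hk1 hpdeg
      have : Q.natDegree = k * p.natDegree + Q₁.natDegree := by
        rw [hQ1, Polynomial.natDegree_mul (pow_ne_zero _ hpne) hQ1ne,
          Polynomial.natDegree_pow]
      omega
    -- roots of Q₁ are roots of Q
    have hrootsQ1 : ∀ z : ℂ, Polynomial.aeval z Q₁ = 0 → IsRootOfRational z := by
      intro z hz
      apply hroots
      rw [hQ1]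
      simp [hz]
    -- Bezout
    have hcop : IsCoprime (p ^ k) Q₁ :=
      (hpirr.coprime_iff_not_dvd.mpr hpQ1).pow_left
    obtain ⟨a, b, hab⟩ := hcop
    -- cast things
    set u : PowerSeries ℚ := (p : PowerSeries ℚ) with hu
    set v : PowerSeries ℚ := (Q₁ : PowerSeries ℚ) with hv
    have hucc : PowerSeries.constantCoeff u ≠ 0 := constCoeff_coe_ne p hp0
    have hvcc : PowerSeries.constantCoeff v ≠ 0 := constCoeff_coe_ne Q₁ hQ10
    have hukcc : PowerSeries.constantCoeff (u ^ k) ≠ 0 := by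
      rw [map_pow]; exact pow_ne_zero _ hucc
    have hQcast : (Q : PowerSeries ℚ) = u ^ k * v := by
      rw [hQ1]; push_cast; ring
    have habc : (a : PowerSeries ℚ) * u ^ k + (b : PowerSeries ℚ) * v = 1 := by
      have := congrArg (fun r : Polynomial ℚ => (r : PowerSeries ℚ)) hab
      push_cast at this
      exact this
    have h1 : (u ^ k * v)⁻¹ * (u ^ k * v) = 1 :=
      PowerSeries.inv_mul_cancel _ (by rw [map_mul]; exact mul_ne_zero hukcc hvcc)
    have h2 : v⁻¹ * v = 1 := PowerSeries.inv_mul_cancel _ hvcc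
    have h3 : (u ^ k)⁻¹ * (u ^ k) = 1 := PowerSeries.inv_mul_cancel _ hukcc
    have hsplit : (P : PowerSeries ℚ) * (Q : PowerSeries ℚ)⁻¹
        = ((P * a : Polynomial ℚ) : PowerSeries ℚ) * v⁻¹
          + ((P * b : Polynomial ℚ) : PowerSeries ℚ) * (u ^ k)⁻¹ := by
      have hD : ((u ^ k * v) : PowerSeries ℚ) ≠ 0 := by
        intro h
        have h' := congrArg (PowerSeries.constantCoeff) h
        rw [map_mul, map_zero] at h'
        exact mul_ne_zero hukcc hvcc h'
      apply mul_right_cancel₀ hD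
      push_cast
      calc (P : PowerSeries ℚ) * (Q : PowerSeries ℚ)⁻¹ * (u ^ k * v)
          = (P : PowerSeries ℚ) * ((u ^ k * v)⁻¹ * (u ^ k * v)) := by rw [hQcast]; ring
        _ = (P : PowerSeries ℚ) := by rw [h1, mul_one]
        _ = (P : PowerSeries ℚ) * ((a : PowerSeries ℚ) * u ^ k + (b : PowerSeries ℚ) * v) := by
            rw [habc, mul_one]
        _ = ((P : PowerSeries ℚ) * (a : PowerSeries ℚ) * u ^ k) * (v⁻¹ * v)
            + ((P : PowerSeries ℚ) * (b : PowerSeries ℚ) * v) * ((u ^ k)⁻¹ * (u ^ k)) := by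
            rw [h2, h3]; ring
        _ = ((P : PowerSeries ℚ) * (a : PowerSeries ℚ) * v⁻¹
            + (P : PowerSeries ℚ) * (b : PowerSeries ℚ) * (u ^ k)⁻¹) * (u ^ k * v) := by ring
    rw [hsplit]
    apply goodPS_add
    · exact ih Q₁.natDegree hdegQ1 Q₁ le_rfl hQ10 hrootsQ1 (P * a)
    · -- the p^k term
      have hpmapne : (p.map (algebraMap ℚ ℂ)).degree > 0 := by
        rw [Polynomial.degree_map]
        exact Polynomial.natDegree_pos_iff_degree_pos.mp hpdeg
      obtain ⟨z, hz⟩ := Complex.exists_root hpmapne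
      have hzp : Polynomial.aeval z p = 0 := by
        rwa [Polynomial.aeval_def, ← Polynomial.eval_map]
      have hzQ : Polynomial.aeval z Q = 0 := by
        rw [hQ1, map_mul, map_pow, hzp, zero_pow (by omega), zero_mul]
      obtain ⟨l, hl1, q, hq⟩ := hroots z hzQ
      have hz0 : z ≠ 0 := by
        intro h
        have h' : Polynomial.aeval (0 : ℂ) p = algebraMap ℚ ℂ (p.coeff 0) := by
          rw [Polynomial.aeval_def, Polynomial.eval₂_at_zero]
        rw [h, h'] at hzp
        have : p.coeff 0 = 0 := (algebraMap ℚ ℂ).injective (by rw [map_zero]; exact hzp)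
        rw [Polynomial.coeff_zero_eq_eval_zero] at this
        exact hp0 this
      have hq0 : q ≠ 0 := by
        intro h
        apply hz0
        have hzl : z ^ l = 0 := by rw [hq, h]; simp
        exact pow_eq_zero_iff (show l ≠ 0 by omega) |>.mp hzl
      -- p divides X^l - C q
      have hpdvd2 : p ∣ (Polynomial.X ^ l - Polynomial.C q) := by
        by_contra hnd
        obtain ⟨a', b', hab'⟩ := hpirr.coprime_iff_not_dvd.mpr hnd
        have h' := congrArg (Polynomial.aeval z) hab'
        simp [hzp, hq] at h'
      obtain ⟨s, hs⟩ := hpdvd2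
      -- power series identity
      set G : PowerSeries ℚ := 1 - PowerSeries.C q⁻¹ * PowerSeries.X ^ l with hG
      have hGcc : PowerSeries.constantCoeff G ≠ 0 := by
        have : PowerSeries.constantCoeff G = 1 := by
          simp [hG, zero_pow (show l ≠ 0 by omega)]
        rw [this]; exact one_ne_zero
      have hGkcc : PowerSeries.constantCoeff (G ^ k) ≠ 0 := by
        rw [map_pow]; exact pow_ne_zero _ hGcc
      have hGk : (G ^ k)⁻¹ * G ^ k = 1 := PowerSeries.inv_mul_cancel _ hGkcc
      have hqq : PowerSeries.C q * PowerSeries.C q⁻¹ = 1 := by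
        rw [← map_mul, mul_inv_cancel₀ hq0, map_one]
      have hus : u * (s : PowerSeries ℚ) = (- PowerSeries.C q) * G := by
        have hcast : PowerSeries.X ^ l - PowerSeries.C q = u * (s : PowerSeries ℚ) := by
          have h' := congrArg (fun r : Polynomial ℚ => (r : PowerSeries ℚ)) hs
          push_cast at h'
          exact h'
        rw [← hcast, hG]
        linear_combination (-(PowerSeries.X ^ l : PowerSeries ℚ)) * hqq
      have hCC : PowerSeries.C (((-q)⁻¹) ^ k) * (- PowerSeries.C q) ^ k = 1 := by
        rw [show (- PowerSeries.C q) = PowerSeries.C (-q) from by rw [map_neg],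
          ← map_pow, ← map_mul, ← mul_pow, inv_mul_cancel₀ (neg_ne_zero.mpr hq0),
          one_pow, map_one]
      set R : Polynomial ℚ := Polynomial.C (((-q)⁻¹) ^ k) * (P * b) * s ^ k with hR
      have hterm : ((P * b : Polynomial ℚ) : PowerSeries ℚ) * (u ^ k)⁻¹
          = (R : PowerSeries ℚ) * (G ^ k)⁻¹ := by
        have hD : (u ^ k * G ^ k) ≠ 0 := by
          intro h
          have h' := congrArg (PowerSeries.constantCoeff) h
          rw [map_mul, map_zero] at h'
          exact mul_ne_zero hukcc hGkcc h'
        apply mul_right_cancel₀ hD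
        have hRc : (R : PowerSeries ℚ)
            = PowerSeries.C (((-q)⁻¹) ^ k) * ((P * b : Polynomial ℚ) : PowerSeries ℚ)
              * ((s : PowerSeries ℚ)) ^ k := by
          rw [hR]; push_cast; ring
        have husk : u ^ k * (s : PowerSeries ℚ) ^ k
            = (- PowerSeries.C q) ^ k * G ^ k := by
          rw [← mul_pow, hus, mul_pow]
        calc ((P * b : Polynomial ℚ) : PowerSeries ℚ) * (u ^ k)⁻¹ * (u ^ k * G ^ k)
            = ((P * b : Polynomial ℚ) : PowerSeries ℚ) * G ^ k * ((u ^ k)⁻¹ * u ^ k) := by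
              ring
          _ = ((P * b : Polynomial ℚ) : PowerSeries ℚ) * G ^ k := by rw [h3, mul_one]
          _ = ((P * b : Polynomial ℚ) : PowerSeries ℚ) * G ^ k
              * (PowerSeries.C (((-q)⁻¹) ^ k) * (- PowerSeries.C q) ^ k) := by
              rw [hCC, mul_one]
          _ = PowerSeries.C (((-q)⁻¹) ^ k) * ((P * b : Polynomial ℚ) : PowerSeries ℚ)
              * ((- PowerSeries.C q) ^ k * G ^ k) * ((G ^ k)⁻¹ * G ^ k) := by
              rw [hGk, mul_one]; ring
          _ = PowerSeries.C (((-q)⁻¹) ^ k) * ((P * b : Polynomial ℚ) : PowerSeries ℚ)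
              * (u ^ k * (s : PowerSeries ℚ) ^ k) * ((G ^ k)⁻¹ * G ^ k) := by rw [husk]
          _ = (R : PowerSeries ℚ) * (G ^ k)⁻¹ * (u ^ k * G ^ k) := by rw [hRc]; ring
      rw [hterm]
      exact goodPS_single R q⁻¹ l k hl1 hk1

/-- If `P, Q ∈ ℚ[x]`, `Q(0) ≠ 0`, and every complex root of `Q` is a root of
a rational number, then in `ℚ[[x]]` one can write
`P·Q⁻¹ = Σ_{i=1}^m R_i · ((1 − λ_i·x^{ℓ_i})^{k_i})⁻¹` with `R_i ∈ ℚ[x]`, `λ_i ∈ ℚ`, and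
integers `ℓ_i, k_i ≥ 1`, where the inverses are taken in `ℚ[[x]]`. -/
theorem partial_fraction_decomposition (P Q : Polynomial ℚ) (h0 : Q.eval 0 ≠ 0)
    (hroots : ∀ z : ℂ, Polynomial.aeval z Q = 0 → IsRootOfRational z) :
    ∃ (m : ℕ) (R : Fin m → Polynomial ℚ) (lam : Fin m → ℚ) (l kk : Fin m → ℕ),
      (∀ i, 1 ≤ l i) ∧ (∀ i, 1 ≤ kk i) ∧
      (P : PowerSeries ℚ) * (Q : PowerSeries ℚ)⁻¹ =
        ∑ i : Fin m, (R i : PowerSeries ℚ) *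
          ((1 - PowerSeries.C (lam i) * PowerSeries.X ^ (l i)) ^ (kk i))⁻¹ := by
  exact main_aux Q.natDegree Q le_rfl h0 hroots P
end
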